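/- arXiv:1708.05755 — 4 statements merged into one kernel-verified Lean document; each statement's English description precedes it below -/
import Mathlib

section
/- If K is a periodic orbit of a continuous map f on a compact metric space and x is a point whose ω-limit set equals K, then x is mean-attracted to K: for every ε > 0 there exists z ∈ K with limsup_{N→∞} (1/N) Σ_{n=1}^{N} d(fⁿx, fⁿz) < ε. -/
open Filter

open Fin.NatCast Fin.CommRing in
/-- If `K` is a finite periodic orbit of a continuous map `f` on a compact metric space
and `x` has ω-limit set equal to `K`, then `x` is mean-attracted to `K`: for every
`ε > 0` there is `z ∈ K` with `limsup_{N→∞} (1/N) Σ_{n=1}^{N} d(fⁿx, fⁿz) < ε`. -/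
theorem periodic_orbit_mean_attracted {X : Type*} [MetricSpace X] [CompactSpace X]
    (f : X → X) (hf : Continuous f) (m : ℕ) (hm : 0 < m)
    (p : Fin m → X) (hinj : Function.Injective p)
    (hcycle : ∀ i : Fin m, f (p i) = p ⟨(i.val + 1) % m, Nat.mod_lt _ hm⟩)
    (x : X)
    (homega : (⋂ n : ℕ, closure ((fun k : ℕ => f^[k] x) '' Set.Ici n)) = Set.range p) :
    ∀ ε > (0 : ℝ), ∃ z ∈ Set.range p,
      limsup (fun N : ℕ => (∑ n ∈ Finset.Icc 1 N, dist (f^[n] x) (f^[n] z)) / N) atTop < ε := by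
  intro ε hε
  haveI : NeZero m := ⟨hm.ne'⟩
  -- rewrite the cycle condition using `Fin` addition
  have hcycle' : ∀ i : Fin m, f (p i) = p (i + 1) := by
    intro i
    rw [hcycle i]
    congr 1
    rw [Fin.ext_iff, Fin.add_def]
    simp [Nat.add_mod]
  have hiter : ∀ (j : Fin m) (n : ℕ), f^[n] (p j) = p (j + (n : Fin m)) := by
    intro j n
    induction n with
    | zero => simp
    | succ n ih =>
      rw [Function.iterate_succ_apply', ih, hcycle']
      congr 1
      push_cast
      ring
  -- separation radius of the finite orbit
  obtain ⟨r, hr0, hrsep⟩ : ∃ r > (0 : ℝ), ∀ i j : Fin m, i ≠ j → r ≤ dist (p i) (p j) := by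
    set S : Finset ℝ :=
      (Finset.univ.filter (fun q : Fin m × Fin m => q.1 ≠ q.2)).image
        (fun q => dist (p q.1) (p q.2)) with hS
    by_cases hne : S.Nonempty
    · refine ⟨S.min' hne, ?_, ?_⟩
      · obtain ⟨d, hd, hdm⟩ := Finset.mem_image.mp (S.min'_mem hne)
        rw [← hdm]
        have : d.1 ≠ d.2 := (Finset.mem_filter.mp hd).2
        exact dist_pos.mpr (fun h => this (hinj h))
      · intro i j hij
        exact S.min'_le _ (Finset.mem_image.mpr ⟨(i, j), Finset.mem_filter.mpr
          ⟨Finset.mem_univ _, hij⟩, rfl⟩)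
    · refine ⟨1, one_pos, fun i j hij => absurd ?_ hne⟩
      exact ⟨dist (p i) (p j), Finset.mem_image.mpr ⟨(i, j), Finset.mem_filter.mpr
        ⟨Finset.mem_univ _, hij⟩, rfl⟩⟩
  set δ : ℝ := min (ε / 2) (r / 4) with hδ
  have hδ0 : 0 < δ := lt_min (by linarith) (by linarith)
  -- uniform continuity
  obtain ⟨η, hη0, hηf⟩ := Metric.uniformContinuous_iff.mp
    (CompactSpace.uniformContinuous_of_continuous hf) δ hδ0
  set η' : ℝ := min η δ with hη'
  have hη'0 : 0 < η' := lt_min hη0 hδ0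
  -- the orbit is attracted to the periodic orbit
  have hattr : ∀ᶠ n in atTop, ∃ i, dist (f^[n] x) (p i) < η' := by
    by_contra hcon
    rw [not_eventually] at hcon
    set U : Set X := ⋃ i, Metric.ball (p i) η' with hU
    have hUopen : IsOpen U := isOpen_iUnion fun i => Metric.isOpen_ball
    set C : ℕ → Set X := fun n => closure ((fun k : ℕ => f^[k] x) '' Set.Ici n) ∩ Uᶜ with hC
    have hCclosed : ∀ n, IsClosed (C n) := fun n =>
      isClosed_closure.inter hUopen.isClosed_compl
    have hCanti : ∀ n, C (n + 1) ⊆ C n := by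
      intro n
      apply Set.inter_subset_inter_left
      exact closure_mono (Set.image_mono (Set.Ici_subset_Ici.mpr (Nat.le_succ n)))
    have hCne : ∀ n, (C n).Nonempty := by
      intro n
      have := (frequently_atTop.mp hcon) n
      obtain ⟨k, hk, hk2⟩ := this
      refine ⟨f^[k] x, subset_closure ⟨k, hk, rfl⟩, ?_⟩
      intro hmem
      obtain ⟨_, ⟨i, rfl⟩, hi⟩ := hmem
      exact hk2 ⟨i, hi⟩
    obtain ⟨y, hy⟩ := IsCompact.nonempty_iInter_of_sequence_nonempty_isCompact_isClosed
      C hCanti hCne ((hCclosed 0).isCompact) hCclosed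
    have hy1 : y ∈ Set.range p := by
      rw [← homega]
      exact Set.mem_iInter.mpr fun n => ((Set.mem_iInter.mp hy n).1)
    have hy2 : y ∉ U := (Set.mem_iInter.mp hy 0).2
    obtain ⟨i, rfl⟩ := hy1
    exact hy2 (Set.mem_iUnion.mpr ⟨i, Metric.mem_ball_self hη'0⟩)
  obtain ⟨N0, hN0⟩ := eventually_atTop.mp hattr
  choose! i hi using hN0
  -- the index increments by one along the orbit
  have hstep : ∀ n, N0 ≤ n → i (n + 1) = i n + 1 := by
    intro n hn
    by_contra hne
    have h1 : dist (f^[n + 1] x) (p (i n + 1)) < δ := by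
      rw [Function.iterate_succ_apply', ← hcycle']
      exact hηf (lt_of_lt_of_le (hi n hn) (min_le_left _ _))
    have h2 : dist (f^[n + 1] x) (p (i (n + 1))) < δ :=
      lt_of_lt_of_le (hi (n + 1) (by omega)) (min_le_right _ _)
    have htri : dist (p (i (n + 1))) (p (i n + 1)) ≤
        dist (f^[n + 1] x) (p (i (n + 1))) + dist (f^[n + 1] x) (p (i n + 1)) := by
      rw [dist_comm (f^[n+1] x) (p (i (n+1)))]
      exact dist_triangle _ _ _
    have hR := hrsep _ _ hne
    have hδr : δ ≤ r / 4 := min_le_right _ _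
    linarith
  have hind : ∀ n, N0 ≤ n → i n = i N0 + ((n - N0 : ℕ) : Fin m) := by
    intro n hn
    induction n, hn using Nat.le_induction with
    | base => simp
    | succ n hn ih =>
      rw [hstep n hn, ih]
      have heq : (n + 1 - N0) = (n - N0) + 1 := by omega
      rw [heq]
      push_cast
      ring
  set z : X := p (i N0 - (N0 : Fin m)) with hzdef
  refine ⟨z, Set.mem_range_self _, ?_⟩
  have hz : ∀ n, N0 ≤ n → dist (f^[n] x) (f^[n] z) < δ := by
    intro n hn
    rw [hzdef, hiter]
    have hidx : i N0 - (N0 : Fin m) + (n : Fin m) = i n := by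
      rw [hind n hn, Nat.cast_sub hn]
      ring
    rw [hidx]
    exact lt_of_lt_of_le (hi n hn) (min_le_right _ _)
  set g : ℕ → ℝ := fun N => (∑ n ∈ Finset.Icc 1 N, dist (f^[n] x) (f^[n] z)) / N with hg
  set Cst : ℝ := ∑ n ∈ Finset.Icc 1 N0, dist (f^[n] x) (f^[n] z) with hCst
  have hCst0 : 0 ≤ Cst := Finset.sum_nonneg fun _ _ => dist_nonneg
  have hsum : ∀ N : ℕ, (∑ n ∈ Finset.Icc 1 N, dist (f^[n] x) (f^[n] z)) ≤ Cst + N * δ := by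
    intro N
    have h1 : (∑ n ∈ Finset.Icc 1 N, dist (f^[n] x) (f^[n] z)) ≤
        ∑ n ∈ Finset.Icc 1 N, ((if n ≤ N0 then dist (f^[n] x) (f^[n] z) else 0) + δ) := by
      apply Finset.sum_le_sum
      intro n hn
      by_cases h : n ≤ N0
      · simp only [if_pos h]
        linarith [hδ0.le]
      · simp only [if_neg h]
        have := hz n (by omega)
        linarith
    have h2 : ∑ n ∈ Finset.Icc 1 N, ((if n ≤ N0 then dist (f^[n] x) (f^[n] z) else 0) + δ)
        = (∑ n ∈ Finset.Icc 1 N, if n ≤ N0 then dist (f^[n] x) (f^[n] z) else 0) + N * δ := by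
      rw [Finset.sum_add_distrib, Finset.sum_const, Nat.card_Icc]
      simp [nsmul_eq_mul]
    have h3 : (∑ n ∈ Finset.Icc 1 N, if n ≤ N0 then dist (f^[n] x) (f^[n] z) else 0) ≤ Cst := by
      rw [← Finset.sum_filter]
      apply Finset.sum_le_sum_of_subset_of_nonneg
      · intro n hn
        simp only [Finset.mem_filter, Finset.mem_Icc] at hn ⊢
        omega
      · intro _ _ _
        exact dist_nonneg
    linarith
  have hbound : ∀ᶠ N : ℕ in atTop, g N ≤ δ + ε / 4 := by
    have htend : Tendsto (fun N : ℕ => Cst / N) atTop (nhds 0) :=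
      tendsto_const_div_atTop_nhds_zero_nat Cst
    have hev : ∀ᶠ N : ℕ in atTop, Cst / N < ε / 4 :=
      (htend.eventually (gt_mem_nhds (by linarith))).mono fun N hN => hN
    filter_upwards [hev, eventually_ge_atTop 1] with N h1 h2
    have hN0' : (0 : ℝ) < N := by exact_mod_cast h2
    have : g N ≤ Cst / N + δ := by
      have hle : g N ≤ (Cst + N * δ) / N := by
        rw [hg]
        exact div_le_div_of_nonneg_right (hsum N) hN0'.le
      have heq : (Cst + N * δ) / N = Cst / N + δ := by
        rw [add_div, mul_div_cancel_left₀ _ hN0'.ne']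
      rw [heq] at hle
      exact hle
    linarith
  calc limsup g atTop ≤ δ + ε / 4 := by
        refine limsup_le_of_le (isCoboundedUnder_le_of_le atTop (x := 0) (fun N => ?_)) hbound
        exact div_nonneg (Finset.sum_nonneg fun _ _ => dist_nonneg) (Nat.cast_nonneg _)
    _ < ε := by
        have : δ ≤ ε / 2 := min_le_left _ _
        linarith
end

section
/- If a continuous map f on a compact interval I has a periodic point of period 3, then f has positive topological entropy; equivalently, an interval map with zero topological entropy has no periodic point of period 3. -/
open Dynamics

namespace Period3Aux

open Set Filter Uniformity UniformSpace ENNReal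

private lemma level_closed {φ : ℝ → ℝ} {u v c : ℝ} (hφ : ContinuousOn φ (Icc u v)) :
    IsClosed {x ∈ Icc u v | φ x = c} := by
  have : {x ∈ Icc u v | φ x = c} = Icc u v ∩ φ ⁻¹' {c} := by ext x; simp
  rw [this]
  exact hφ.preimage_isClosed_of_isClosed isClosed_Icc isClosed_singleton

private lemma exact_sub_aux {φ : ℝ → ℝ} {s t c d : ℝ} (hst : s ≤ t)
    (hφ : ContinuousOn φ (Icc s t)) (hcd : c ≤ d) (hs : φ s = c) (ht : φ t = d) :
    ∃ p q, p ≤ q ∧ Icc p q ⊆ Icc s t ∧ φ '' Icc p q = Icc c d := by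
  set D := {x ∈ Icc s t | φ x = d} with hD
  have hDc : IsClosed D := level_closed hφ
  have hDne : D.Nonempty := ⟨t, ⟨right_mem_Icc.2 hst, ht⟩⟩
  have hDbdd : BddBelow D := ⟨s, fun x hx => hx.1.1⟩
  set t0 := sInf D with ht0
  have ht0m : t0 ∈ D := hDc.csInf_mem hDne hDbdd
  have ht0I : t0 ∈ Icc s t := ht0m.1
  have hφt0 : φ t0 = d := ht0m.2
  set C := {x ∈ Icc s t0 | φ x = c} with hC
  have hCc : IsClosed C := level_closed (hφ.mono (Icc_subset_Icc le_rfl ht0I.2))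
  have hCne : C.Nonempty := ⟨s, ⟨left_mem_Icc.2 ht0I.1, hs⟩⟩
  have hCbdd : BddAbove C := ⟨t0, fun x hx => hx.1.2⟩
  set p := sSup C with hp
  have hpm : p ∈ C := hCc.csSup_mem hCne hCbdd
  have hpI : p ∈ Icc s t0 := hpm.1
  have hφp : φ p = c := hpm.2
  refine ⟨p, t0, hpI.2, Icc_subset_Icc hpI.1 ht0I.2, ?_⟩
  have hsub : Icc p t0 ⊆ Icc s t := Icc_subset_Icc hpI.1 ht0I.2
  have hφ' : ContinuousOn φ (Icc p t0) := hφ.mono hsub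
  apply Subset.antisymm
  · rintro y ⟨x, hx, rfl⟩
    constructor
    · by_contra hlt
      push_neg at hlt
      have : c ∈ Icc (φ x) (φ t0) := ⟨hlt.le, hφt0 ▸ hcd⟩
      obtain ⟨y, hyI, hyc⟩ := intermediate_value_Icc hx.2 (hφ'.mono (Icc_subset_Icc hx.1 le_rfl)) this
      have hyC : y ∈ C := ⟨⟨hpI.1.trans (hx.1.trans hyI.1), hyI.2⟩, hyc⟩
      have h1 : y ≤ p := le_csSup hCbdd hyC
      have hxy : y = x := le_antisymm (h1.trans hx.1) hyI.1
      exact absurd (hxy ▸ hyc) hlt.ne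
    · by_contra hlt
      push_neg at hlt
      have : d ∈ Icc (φ p) (φ x) := ⟨hφp ▸ hcd, hlt.le⟩
      obtain ⟨y, hyI, hyd⟩ := intermediate_value_Icc hx.1 (hφ'.mono (Icc_subset_Icc le_rfl hx.2)) this
      have hyD : y ∈ D := ⟨⟨hpI.1.trans hyI.1, (hyI.2.trans hx.2).trans ht0I.2⟩, hyd⟩
      have h1 : t0 ≤ y := csInf_le hDbdd hyD
      have hxt0 : x = t0 := le_antisymm hx.2 (h1.trans hyI.2)
      exact absurd (hxt0 ▸ hφt0) hlt.ne'
  · have := intermediate_value_Icc hpI.2 hφ'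
    rw [hφp, hφt0] at this
    exact this

private lemma exact_sub {φ : ℝ → ℝ} {u v c d : ℝ} (huv : u ≤ v)
    (hφ : ContinuousOn φ (Icc u v)) (hcd : c ≤ d)
    (hsub : Icc c d ⊆ φ '' Icc u v) :
    ∃ p q, p ≤ q ∧ Icc p q ⊆ Icc u v ∧ φ '' Icc p q = Icc c d := by
  obtain ⟨s, hsI, hsc⟩ := hsub (left_mem_Icc.2 hcd)
  obtain ⟨t, htI, htd⟩ := hsub (right_mem_Icc.2 hcd)
  rcases le_total s t with hst | hts
  · obtain ⟨p, q, hpq, hsub', himg⟩ :=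
      exact_sub_aux hst (hφ.mono (Icc_subset_Icc hsI.1 htI.2)) hcd hsc htd
    exact ⟨p, q, hpq, hsub'.trans (Icc_subset_Icc hsI.1 htI.2), himg⟩
  · set ψ : ℝ → ℝ := fun x => φ (-x) with hψ
    have hcont : ContinuousOn ψ (Icc (-s) (-t)) := by
      apply ContinuousOn.comp (g := φ) (f := fun x : ℝ => -x)
        (hφ.mono (Icc_subset_Icc htI.1 hsI.2)) (continuous_neg.continuousOn)
      intro x hx
      simp only [mem_Icc] at hx ⊢
      constructor <;> linarith [hx.1, hx.2]
    have h1 : ψ (-s) = c := by simp [hψ, hsc]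
    have h2 : ψ (-t) = d := by simp [hψ, htd]
    obtain ⟨p, q, hpq, hsub', himg⟩ :=
      exact_sub_aux (neg_le_neg hts) hcont hcd h1 h2
    refine ⟨-q, -p, neg_le_neg hpq, ?_, ?_⟩
    · intro x hx
      have hm : -x ∈ Icc p q := ⟨le_neg.2 hx.2, neg_le.1 hx.1⟩
      have h2' : -x ∈ Icc (-s) (-t) := hsub' hm
      simp only [mem_Icc] at h2' ⊢
      constructor <;> linarith [h2'.1, h2'.2, htI.1, hsI.2]
    · have heq : Icc (-q) (-p) = (fun x : ℝ => -x) '' Icc p q := by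
        ext y
        constructor
        · intro hy
          exact ⟨-y, ⟨le_neg.2 hy.2, neg_le.1 hy.1⟩, neg_neg y⟩
        · rintro ⟨x, hx, rfl⟩
          exact ⟨neg_le_neg hx.2, neg_le_neg hx.1⟩
      rw [heq, ← himg, image_image]

private lemma contOn_iterate {T : ℝ → ℝ} {a b : ℝ} (hT : ContinuousOn T (Icc a b))
    (hm : Set.MapsTo T (Icc a b) (Icc a b)) (n : ℕ) :
    ContinuousOn (T^[n]) (Icc a b) := by
  induction n with
  | zero => simpa using continuousOn_id
  | succ n ih =>
      rw [Function.iterate_succ']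
      exact hT.comp ih (hm.iterate n)

private lemma itinerary {T : ℝ → ℝ} {a b : ℝ} (hT : ContinuousOn T (Icc a b))
    (hm : Set.MapsTo T (Icc a b) (Icc a b)) (e0 e1 : Bool → ℝ)
    (he : ∀ i, e0 i ≤ e1 i) (hsub : ∀ i, Icc (e0 i) (e1 i) ⊆ Icc a b)
    (hcov : ∀ i j, Icc (e0 j) (e1 j) ⊆ T '' Icc (e0 i) (e1 i)) (n : ℕ) (w : ℕ → Bool) :
    ∃ p q, p ≤ q ∧ Icc p q ⊆ Icc (e0 (w 0)) (e1 (w 0)) ∧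
      (∀ i < n, T^[i] '' Icc p q ⊆ Icc (e0 (w i)) (e1 (w i))) ∧
      T^[n] '' Icc p q = Icc (e0 (w n)) (e1 (w n)) := by
  induction n with
  | zero =>
      exact ⟨e0 (w 0), e1 (w 0), he _, Subset.rfl, fun i hi => absurd hi (Nat.not_lt_zero i),
        by simp⟩
  | succ n ih =>
      obtain ⟨p, q, hpq, hsub0, hmid, hlast⟩ := ih
      have hpqab : Icc p q ⊆ Icc a b := hsub0.trans (hsub _)
      have hcont : ContinuousOn (T^[n+1]) (Icc p q) :=
        (contOn_iterate hT hm (n+1)).mono hpqab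
      have himg : Icc (e0 (w (n+1))) (e1 (w (n+1))) ⊆ T^[n+1] '' Icc p q := by
        rw [Function.iterate_succ', Set.image_comp, hlast]
        exact hcov _ _
      obtain ⟨p', q', hpq', hsub', himg'⟩ := exact_sub hpq hcont (he _) himg
      refine ⟨p', q', hpq', hsub'.trans hsub0, ?_, himg'⟩
      intro i hi
      rcases Nat.lt_succ_iff_lt_or_eq.1 hi with hi | rfl
      · exact (Set.image_mono hsub').trans (hmid i hi)
      · rw [← hlast]; exact Set.image_mono hsub'

private lemma img_sq {f : ℝ → ℝ} (S : Set ℝ) : f^[2] '' S = f '' (f '' S) := by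
  rw [show f^[2] = f ∘ f by rw [Function.iterate_succ', Function.iterate_one], Set.image_comp]

private lemma sq_cover {f : ℝ → ℝ} {y1 y3 l1 l2 m1 m2 : ℝ}
    (hLsub : Icc l1 l2 ⊆ Icc y1 y3)
    (hL : Icc y1 y3 ⊆ f '' Icc l1 l2) (hM : Icc l1 l2 ⊆ f '' Icc m1 m2) :
    Icc y1 y3 ⊆ f^[2] '' Icc l1 l2 ∧ Icc y1 y3 ⊆ f^[2] '' Icc m1 m2 := by
  constructor
  · rw [img_sq]
    exact hL.trans (Set.image_mono (hLsub.trans hL))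
  · rw [img_sq]
    exact hL.trans (Set.image_mono hM)

private lemma cycle_cover {f : ℝ → ℝ} {a b x1 x2 x3 : ℝ}
    (hf : ContinuousOn f (Icc a b))
    (h12 : x1 < x2) (h23 : x2 < x3) (hx1 : x1 ∈ Icc a b) (hx3 : x3 ∈ Icc a b)
    (hcyc : (f x1 = x2 ∧ f x2 = x3 ∧ f x3 = x1) ∨ (f x1 = x3 ∧ f x2 = x1 ∧ f x3 = x2)) :
    Icc x1 x3 ⊆ f^[2] '' Icc x1 x2 ∧ Icc x1 x3 ⊆ f^[2] '' Icc x2 x3 := by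
  have hIab : Icc x1 x3 ⊆ Icc a b := Icc_subset_Icc hx1.1 hx3.2
  rcases hcyc with ⟨c1, c2, c3⟩ | ⟨c1, c2, c3⟩
  · have hL : Icc x1 x3 ⊆ f '' Icc x2 x3 := by
      have := intermediate_value_Icc' h23.le
        (hf.mono ((Icc_subset_Icc h12.le le_rfl).trans hIab))
      rwa [c2, c3] at this
    have hM : Icc x2 x3 ⊆ f '' Icc x1 x2 := by
      have := intermediate_value_Icc h12.le
        (hf.mono ((Icc_subset_Icc le_rfl h23.le).trans hIab))
      rwa [c1, c2] at this
    have := sq_cover (Icc_subset_Icc h12.le le_rfl) hL hM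
    exact ⟨this.2, this.1⟩
  · have hL : Icc x1 x3 ⊆ f '' Icc x1 x2 := by
      have := intermediate_value_Icc' h12.le
        (hf.mono ((Icc_subset_Icc le_rfl h23.le).trans hIab))
      rwa [c1, c2] at this
    have hM : Icc x1 x2 ⊆ f '' Icc x2 x3 := by
      have := intermediate_value_Icc h23.le
        (hf.mono ((Icc_subset_Icc h12.le le_rfl).trans hIab))
      rwa [c2, c3] at this
    exact sq_cover (Icc_subset_Icc le_rfl h23.le) hL hM

/-- From a (loose) horseshoe for `g` with common endpoint `y2`, a strict horseshoe for `g^[2]`. -/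
private lemma strict_horseshoe {g : ℝ → ℝ} {a b y1 y2 y3 : ℝ}
    (hg : ContinuousOn g (Icc a b)) (hab : Icc y1 y3 ⊆ Icc a b)
    (h12 : y1 < y2) (h23 : y2 < y3)
    (hA : Icc y1 y3 ⊆ g '' Icc y1 y2) (hB : Icc y1 y3 ⊆ g '' Icc y2 y3) :
    ∃ p1 p2 q1 q2, p1 ≤ p2 ∧ p2 < q1 ∧ q1 ≤ q2 ∧
      Icc p1 p2 ⊆ Icc y1 y3 ∧ Icc q1 q2 ⊆ Icc y1 y3 ∧
      Icc y1 y3 ⊆ g^[2] '' Icc p1 p2 ∧ Icc y1 y3 ⊆ g^[2] '' Icc q1 q2 := by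
  -- choose target values c < d avoiding g y2
  obtain ⟨c, d, hcd, hc1, hd3, hgc, hgd, hcov⟩ :
      ∃ c d, c < d ∧ y1 ≤ c ∧ d ≤ y3 ∧ g y2 ≠ c ∧ g y2 ≠ d ∧
        Icc y1 y3 ⊆ g '' Icc c d := by
    by_cases h1 : g y2 = y1
    · exact ⟨y2, y3, h23, h12.le, le_rfl, fun h => h12.ne (h1.symm.trans h),
        fun h => (h12.trans h23).ne (h1.symm.trans h), hB⟩
    · by_cases h3 : g y2 = y3
      · exact ⟨y1, y2, h12, le_rfl, h23.le, fun h => (h12.trans h23).ne' (h3.symm.trans h),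
          fun h => h23.ne' (h3.symm.trans h), hA⟩
      · exact ⟨y1, y3, h12.trans h23, le_rfl, le_rfl, h1, h3,
          hA.trans (Set.image_mono (Icc_subset_Icc le_rfl h23.le))⟩
  have hcmem : c ∈ Icc y1 y3 := ⟨hc1, hcd.le.trans hd3⟩
  have hdmem : d ∈ Icc y1 y3 := ⟨hc1.trans hcd.le, hd3⟩
  have hAab : Icc y1 y2 ⊆ Icc a b := (Icc_subset_Icc le_rfl h23.le).trans hab
  have hBab : Icc y2 y3 ⊆ Icc a b := (Icc_subset_Icc h12.le le_rfl).trans hab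
  -- the two sup-preimages in A
  have key : ∀ e : ℝ, e ∈ Icc y1 y3 → g y2 ≠ e →
      ∃ u, u ∈ Icc y1 y2 ∧ g u = e ∧ u < y2 := by
    intro e he hne
    obtain ⟨x, hx, hxe⟩ := hA he
    set S := {x ∈ Icc y1 y2 | g x = e} with hS
    have hSc : IsClosed S := level_closed (hg.mono hAab)
    have hSne : S.Nonempty := ⟨x, hx, hxe⟩
    have hSbdd : BddAbove S := ⟨y2, fun z hz => hz.1.2⟩
    have hmem := hSc.csSup_mem hSne hSbdd
    refine ⟨sSup S, hmem.1, hmem.2, lt_of_le_of_ne hmem.1.2 ?_⟩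
    intro h
    exact hne (h ▸ hmem.2)
  have key' : ∀ e : ℝ, e ∈ Icc y1 y3 → g y2 ≠ e →
      ∃ u, u ∈ Icc y2 y3 ∧ g u = e ∧ y2 < u := by
    intro e he hne
    obtain ⟨x, hx, hxe⟩ := hB he
    set S := {x ∈ Icc y2 y3 | g x = e} with hS
    have hSc : IsClosed S := level_closed (hg.mono hBab)
    have hSne : S.Nonempty := ⟨x, hx, hxe⟩
    have hSbdd : BddBelow S := ⟨y2, fun z hz => hz.1.1⟩
    have hmem := hSc.csInf_mem hSne hSbdd
    refine ⟨sInf S, hmem.1, hmem.2, lt_of_le_of_ne hmem.1.1 ?_⟩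
    intro h
    exact hne (h.symm ▸ hmem.2)
  obtain ⟨u1, hu1, hgu1, hu1lt⟩ := key c hcmem hgc
  obtain ⟨u2, hu2, hgu2, hu2lt⟩ := key d hdmem hgd
  obtain ⟨v1, hv1, hgv1, hv1lt⟩ := key' c hcmem hgc
  obtain ⟨v2, hv2, hgv2, hv2lt⟩ := key' d hdmem hgd
  refine ⟨min u1 u2, max u1 u2, min v1 v2, max v1 v2, min_le_max, ?_, min_le_max, ?_, ?_, ?_, ?_⟩
  · exact lt_of_lt_of_le (max_lt hu1lt hu2lt) (le_min hv1lt.le hv2lt.le)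
  · exact Icc_subset_Icc (le_min hu1.1 hu2.1) ((max_le hu1.2 hu2.2).trans h23.le)
  · exact Icc_subset_Icc (h12.le.trans (le_min hv1.1 hv2.1)) (max_le hv1.2 hv2.2)
  · rw [img_sq]
    have h1 : Icc c d ⊆ g '' Icc (min u1 u2) (max u1 u2) := by
      have := intermediate_value_uIcc (f := g) (a := u1) (b := u2)
        ((hg.mono hAab).mono ?_)
      · rw [hgu1, hgu2, uIcc_of_le hcd.le] at this
        rwa [← uIcc] 
      · rw [uIcc]; exact Icc_subset_Icc (le_min hu1.1 hu2.1) (max_le hu1.2 hu2.2)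
    exact hcov.trans (Set.image_mono h1)
  · rw [img_sq]
    have h1 : Icc c d ⊆ g '' Icc (min v1 v2) (max v1 v2) := by
      have := intermediate_value_uIcc (f := g) (a := v1) (b := v2)
        ((hg.mono hBab).mono ?_)
      · rw [hgv1, hgv2, uIcc_of_le hcd.le] at this
        rwa [← uIcc] 
      · rw [uIcc]; exact Icc_subset_Icc (le_min hv1.1 hv2.1) (max_le hv1.2 hv2.2)
    exact hcov.trans (Set.image_mono h1)

private lemma entropy_lower {f : ℝ → ℝ} {a b : ℝ}
    (hf : ContinuousOn f (Icc a b)) (hmaps : Set.MapsTo f (Icc a b) (Icc a b))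
    (e0 e1 : Bool → ℝ) (he : ∀ i, e0 i ≤ e1 i) (hsub : ∀ i, Icc (e0 i) (e1 i) ⊆ Icc a b)
    (hgap : e1 false < e0 true)
    (hcov : ∀ i j : Bool, Icc (e0 j) (e1 j) ⊆ (f^[4]) '' Icc (e0 i) (e1 i)) :
    0 < coverEntropy f (Icc a b) := by
  classical
  set F := Icc a b with hF
  set T := f^[4] with hTdef
  have hT : ContinuousOn T F := contOn_iterate hf hmaps 4
  have hm : Set.MapsTo T F F := hmaps.iterate 4
  set ε := e0 true - e1 false with hε
  have hεpos : 0 < ε := sub_pos.2 hgap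
  set U : Set (ℝ × ℝ) := {p : ℝ × ℝ | dist p.1 p.2 < ε / 2} with hUdef
  have hU : U ∈ 𝓤 ℝ := Metric.dist_mem_uniformity (by positivity)
  have hUsymm : Prod.swap ⁻¹' U = U := by
    ext ⟨x, y⟩
    simp [hUdef, dist_comm]
  -- the 2^n separated points
  have hcount : ∀ n : ℕ, (2^n : ℕ∞) ≤ netMaxcard f F U (4*n) := by
    intro n
    have hpoint : ∀ w : Fin n → Bool, ∃ x, x ∈ F ∧
        ∀ i : Fin n, T^[(i : ℕ)] x ∈ Icc (e0 (w i)) (e1 (w i)) := by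
      intro w
      set w' : ℕ → Bool := fun i => if h : i < n then w ⟨i, h⟩ else false with hw'
      obtain ⟨p, q, hpq, hs0, hmid, _⟩ := itinerary hT hm e0 e1 he hsub hcov n w'
      refine ⟨p, (hsub _) (hs0 (left_mem_Icc.2 hpq)), fun i => ?_⟩
      have h1 : T^[(i : ℕ)] p ∈ T^[(i : ℕ)] '' Icc p q :=
        mem_image_of_mem _ (left_mem_Icc.2 hpq)
      have h2 := hmid (i : ℕ) i.isLt h1
      have : w' (i : ℕ) = w i := by simp [hw', i.isLt]
      rwa [this] at h2
    choose Φ hΦF hΦ using hpoint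
    have hsep : ∀ w w' : Fin n → Bool, w ≠ w' →
        ∃ i : Fin n, ε ≤ dist (T^[(i : ℕ)] (Φ w)) (T^[(i : ℕ)] (Φ w')) := by
      intro w w' hne
      obtain ⟨i, hi⟩ := Function.ne_iff.1 hne
      refine ⟨i, ?_⟩
      have h1 := hΦ w i
      have h2 := hΦ w' i
      rcases Bool.eq_false_or_eq_true (w i) with hb | hb <;>
        rcases Bool.eq_false_or_eq_true (w' i) with hb' | hb' <;>
          rw [hb] at h1 hi <;> rw [hb'] at h2 hi
      · exact absurd rfl hi
      · rw [Real.dist_eq, le_abs]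
        left
        have := h1.1; have := h2.2; linarith
      · rw [Real.dist_eq, le_abs]
        right
        have := h1.2; have := h2.1; linarith
      · exact absurd rfl hi
    have hinj : Function.Injective Φ := by
      intro w w' hww
      by_contra hne
      obtain ⟨i, hi⟩ := hsep w w' hne
      rw [hww, dist_self] at hi
      exact absurd (hεpos.trans_le hi) (lt_irrefl 0)
    set s : Finset ℝ := Finset.image Φ Finset.univ with hs
    have hnet : IsDynNetIn f F U (4*n) (s : Set ℝ) := by
      constructor
      · intro x hx
        simp only [hs, Finset.coe_image, Finset.coe_univ, image_univ, mem_range] at hx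
        obtain ⟨w, rfl⟩ := hx
        exact hΦF w
      · intro x hx y hy hxy
        simp only [hs, Finset.coe_image, Finset.coe_univ, image_univ, mem_range] at hx hy
        obtain ⟨w, rfl⟩ := hx
        obtain ⟨w', rfl⟩ := hy
        have hne : w ≠ w' := fun h => hxy (congrArg Φ h)
        obtain ⟨i, hi⟩ := hsep w w' hne
        simp only [Function.onFun]
        rw [Set.disjoint_left]
        intro z hz1 hz2
        rw [ball, mem_preimage, mem_dynEntourage] at hz1 hz2
        have h4i : 4 * (i : ℕ) < 4 * n := by
          have := i.isLt; omega
        have hz1' := hz1 (4 * (i : ℕ)) h4i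
        have hz2' := hz2 (4 * (i : ℕ)) h4i
        rw [Function.iterate_mul] at hz1' hz2'
        simp only [hUdef, mem_setOf_eq] at hz1' hz2'
        have htri := dist_triangle (T^[(i:ℕ)] (Φ w)) (T^[(i:ℕ)] z) (T^[(i:ℕ)] (Φ w'))
        rw [dist_comm (T^[(i:ℕ)] z) (T^[(i:ℕ)] (Φ w'))] at htri
        rw [← hTdef] at hz1' hz2'
        linarith
    have hcard : s.card = 2^n := by
      rw [hs, Finset.card_image_of_injective _ hinj, Finset.card_univ]
      simp [Fintype.card_fun]
    calc (2^n : ℕ∞) = (s.card : ℕ∞) := by rw [hcard]; push_cast; ring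
    _ ≤ netMaxcard f F U (4*n) := hnet.card_le_netMaxcard
  -- entropy bound
  set C : EReal := ((Real.log 2 / 4 : ℝ) : EReal) with hC
  have hlog2 : ENNReal.log 2 = ((Real.log 2 : ℝ) : EReal) := by
    rw [ENNReal.log]
    norm_num
  have hfreq : ∃ᶠ m in atTop, C ≤ ENNReal.log (coverMincard f F U m) / (m : ℕ) := by
    rw [Filter.frequently_atTop]
    intro N
    refine ⟨4 * (N + 1), by omega, ?_⟩
    set n := N + 1 with hn
    have h1 : (2^n : ℕ∞) ≤ coverMincard f F U (4*n) :=
      (hcount n).trans (netMaxcard_le_coverMincard f F (4*n))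
    have h2 : ((2 : ℝ≥0∞)^n) ≤ ((coverMincard f F U (4*n) : ℕ∞) : ℝ≥0∞) := by
      exact_mod_cast h1
    have h3 := ENNReal.log_monotone h2
    rw [ENNReal.log_pow, hlog2] at h3
    have h4 := EReal.div_le_div_right_of_nonneg (c := ((4*n : ℕ) : EReal))
      (by exact_mod_cast Nat.cast_nonneg' (4*n)) h3
    refine le_trans (le_of_eq ?_) h4
    rw [← EReal.coe_coe_eq_natCast n, ← EReal.coe_coe_eq_natCast (4*n),
      ← EReal.coe_mul, ← EReal.coe_div, hC, EReal.coe_eq_coe_iff]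
    have hn0 : (n : ℝ) ≠ 0 := by positivity
    field_simp
    push_cast; ring
  have hent : C ≤ coverEntropyEntourage f F U := le_limsup_of_frequently_le' hfreq
  have hent2 : C ≤ coverEntropy f F := hent.trans (coverEntropyEntourage_le_coverEntropy f F hU)
  refine lt_of_lt_of_le ?_ hent2
  rw [hC]
  exact EReal.coe_pos.2 (by positivity)

private lemma period3_glue {f : ℝ → ℝ} {a b x1 x2 x3 : ℝ}
    (hf : ContinuousOn f (Icc a b)) (hmaps : Set.MapsTo f (Icc a b) (Icc a b))
    (h12 : x1 < x2) (h23 : x2 < x3) (hx1 : x1 ∈ Icc a b) (hx3 : x3 ∈ Icc a b)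
    (hcyc : (f x1 = x2 ∧ f x2 = x3 ∧ f x3 = x1) ∨ (f x1 = x3 ∧ f x2 = x1 ∧ f x3 = x2)) :
    0 < coverEntropy f (Icc a b) := by
  obtain ⟨hA, hB⟩ := cycle_cover hf h12 h23 hx1 hx3 hcyc
  have hg : ContinuousOn (f^[2]) (Icc a b) := contOn_iterate hf hmaps 2
  have hIab : Icc x1 x3 ⊆ Icc a b := Icc_subset_Icc hx1.1 hx3.2
  obtain ⟨p1, p2, q1, q2, hp12, hpq, hq12, hPsub, hQsub, hP, hQ⟩ :=
    strict_horseshoe hg hIab h12 h23 hA hB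
  have h4eq : f^[4] = (f^[2])^[2] := by
    rw [show (4 : ℕ) = 2 * 2 from rfl, Function.iterate_mul]
  refine entropy_lower hf hmaps (fun i => if i then q1 else p1) (fun i => if i then q2 else p2)
    (fun i => ?_) (fun i => ?_) (by simpa using hpq) (fun i j => ?_)
  · cases i <;> simpa
  · cases i <;> simp <;> [exact (hPsub.trans hIab); exact (hQsub.trans hIab)]
  · rw [h4eq]
    have h1 : Icc ((fun i => if i then q1 else p1) j) ((fun i => if i then q2 else p2) j) ⊆
        Icc x1 x3 := by cases j <;> simpa
    refine h1.trans ?_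
    cases i <;> simpa

end Period3Aux

open Period3Aux in
/-- If a continuous map of a compact interval to itself has a periodic point of
(primitive) period 3, then it has positive topological entropy. Equivalently, an
interval map with zero topological entropy has no periodic point of period 3. -/
theorem period_three_positive_entropy (a b : ℝ) (f : ℝ → ℝ)
    (hf : ContinuousOn f (Set.Icc a b))
    (hmaps : Set.MapsTo f (Set.Icc a b) (Set.Icc a b))
    (p : ℝ) (hp : p ∈ Set.Icc a b)
    (h3 : f^[3] p = p) (h1 : f^[1] p ≠ p) (h2 : f^[2] p ≠ p) :
    0 < coverEntropy f (Set.Icc a b) := by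
  have h1' : f p ≠ p := by simpa using h1
  have h2' : f (f p) ≠ p := by
    simpa [Function.iterate_succ_apply'] using h2
  have h3' : f (f (f p)) = p := by
    simpa [Function.iterate_succ_apply'] using h3
  set q := f p with hq
  set r := f q with hr
  have hfr : f r = p := h3'
  have hqmem : q ∈ Set.Icc a b := hmaps hp
  have hrmem : r ∈ Set.Icc a b := hmaps hqmem
  have hpq : p ≠ q := fun h => h1' h.symm
  have hrp : r ≠ p := h2'
  have hqr : q ≠ r := fun h => hrp (by rw [hr, h]; exact hfr)
  rcases lt_trichotomy p q with hpq' | hpq' | hpq'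
  · rcases lt_trichotomy q r with hqr' | hqr' | hqr'
    · exact period3_glue hf hmaps hpq' hqr' hp hrmem (Or.inl ⟨rfl, rfl, hfr⟩)
    · exact absurd hqr' hqr
    · rcases lt_trichotomy p r with hpr | hpr | hpr
      · exact period3_glue hf hmaps hpr hqr' hp hqmem (Or.inr ⟨rfl, hfr, rfl⟩)
      · exact absurd hpr.symm hrp
      · exact period3_glue hf hmaps hpr hpq' hrmem hqmem (Or.inl ⟨hfr, rfl, rfl⟩)
  · exact absurd hpq' hpq
  · rcases lt_trichotomy p r with hpr | hpr | hpr
    · exact period3_glue hf hmaps hpq' hpr hqmem hrmem (Or.inr ⟨rfl, rfl, hfr⟩)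
    · exact absurd hpr.symm hrp
    · rcases lt_trichotomy q r with hqr' | hqr' | hqr'
      · exact period3_glue hf hmaps hqr' hpr hqmem hp (Or.inl ⟨rfl, hfr, rfl⟩)
      · exact absurd hqr' hqr
      · exact period3_glue hf hmaps hqr' hpq' hrmem hp (Or.inr ⟨hfr, rfl, rfl⟩)
end

section
/- If f is a continuous interval map with zero topological entropy, then the (primitive) period of every periodic point of f is a power of 2. -/
open Dynamics

section ZEAux
open Set ENNReal EReal Filter UniformSpace



/-- Core onto-subinterval lemma, increasing orientation. -/
lemma exact_image_core {h : ℝ → ℝ} {p q c d : ℝ} (hpq : p ≤ q) (hcd : c ≤ d)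
    (hc : ContinuousOn h (Icc p q)) (hhp : h p = c) (hhq : h q = d) :
    ∃ s t, p ≤ s ∧ s ≤ t ∧ t ≤ q ∧ h '' (Icc s t) = Icc c d := by
  classical
  set E : Set ℝ := {z ∈ Icc p q | h z = d} with hE
  have hEclosed : IsClosed E := by
    have := hc.preimage_isClosed_of_isClosed isClosed_Icc (isClosed_singleton (x := d))
    exact this
  have hEne : E.Nonempty := ⟨q, ⟨right_mem_Icc.2 hpq, hhq⟩⟩
  have hEbdd : BddBelow E := ⟨p, fun z hz => hz.1.1⟩
  set t := sInf E with ht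
  have htE : t ∈ E := hEclosed.csInf_mem hEne hEbdd
  have htmem : t ∈ Icc p q := htE.1
  have hht : h t = d := htE.2
  set F : Set ℝ := {z ∈ Icc p t | h z = c} with hF
  have hFclosed : IsClosed F := by
    have hsub : Icc p t ⊆ Icc p q := Icc_subset_Icc le_rfl htmem.2
    have := (hc.mono hsub).preimage_isClosed_of_isClosed isClosed_Icc
      (isClosed_singleton (x := c))
    exact this
  have hFne : F.Nonempty := ⟨p, ⟨left_mem_Icc.2 htmem.1, hhp⟩⟩
  have hFbdd : BddAbove F := ⟨t, fun z hz => hz.1.2⟩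
  set s := sSup F with hs
  have hsF : s ∈ F := hFclosed.csSup_mem hFne hFbdd
  have hsmem : s ∈ Icc p t := hsF.1
  have hhs : h s = c := hsF.2
  refine ⟨s, t, hsmem.1, hsmem.2, htmem.2, ?_⟩
  have hsub : Icc s t ⊆ Icc p q := Icc_subset_Icc hsmem.1 htmem.2
  have hcst : ContinuousOn h (Icc s t) := hc.mono hsub
  apply Subset.antisymm
  · rintro _ ⟨z, hz, rfl⟩
    constructor
    · by_contra hlt
      push_neg at hlt
      -- h z < c, h t = d ≥ c, find w in [z,t] with h w = c, w > s
      have hzt : z ≤ t := hz.2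
      have : c ∈ Icc (h z) (h t) := ⟨hlt.le, hht ▸ hcd⟩
      obtain ⟨w, hw, hhw⟩ := intermediate_value_Icc hzt (hcst.mono (Icc_subset_Icc hz.1 le_rfl)) this
      have hws : w ≤ s := le_csSup hFbdd ⟨⟨hsmem.1.trans (hz.1.trans hw.1), hw.2⟩, hhw⟩
      have : z ≤ s := le_trans hw.1 hws |>.trans (le_refl s) |>.trans (le_refl s)
      -- then z = s? z ≥ s and z ≤ w ≤ s gives z ≤ s, with hz.1 : s ≤ z so z = s
      have hzs : z = s := le_antisymm (hw.1.trans hws) hz.1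
      rw [hzs, hhs] at hlt
      exact lt_irrefl _ hlt
    · by_contra hlt
      push_neg at hlt
      -- h z > d, h s = c ≤ d, find w in [s,z] with h w = d, w < t
      have hsz : s ≤ z := hz.1
      have : d ∈ Icc (h s) (h z) := ⟨hhs ▸ hcd, hlt.le⟩
      obtain ⟨w, hw, hhw⟩ := intermediate_value_Icc hsz (hcst.mono (Icc_subset_Icc le_rfl hz.2)) this
      have hwt : t ≤ w := csInf_le hEbdd ⟨⟨hsmem.1.trans hw.1, (hw.2.trans hz.2).trans htmem.2⟩, hhw⟩
      have hzt : z = t := le_antisymm hz.2 (hwt.trans hw.2)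
      rw [hzt, hht] at hlt
      exact lt_irrefl _ hlt
  · have := intermediate_value_Icc hsmem.2 hcst
    rw [hhs, hht] at this
    exact this


/-- Onto-subinterval: decreasing orientation. -/
lemma exact_image_core' {h : ℝ → ℝ} {p q c d : ℝ} (hpq : p ≤ q) (hcd : c ≤ d)
    (hc : ContinuousOn h (Icc p q)) (hhp : h p = d) (hhq : h q = c) :
    ∃ s t, p ≤ s ∧ s ≤ t ∧ t ≤ q ∧ h '' (Icc s t) = Icc c d := by
  set g : ℝ → ℝ := h ∘ (fun z => p + q - z) with hg
  have himg : (fun z : ℝ => p + q - z) '' Icc p q = Icc p q := by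
    rw [Set.image_const_sub_Icc]
    congr 1 <;> ring
  have hgc : ContinuousOn g (Icc p q) := by
    apply hc.comp (Continuous.continuousOn (by fun_prop))
    exact fun z hz => himg ▸ Set.mem_image_of_mem _ hz
  have hgp : g p = c := by
    show h (p + q - p) = c
    rw [show p + q - p = q by ring, hhq]
  have hgq : g q = d := by
    show h (p + q - q) = d
    rw [show p + q - q = p by ring, hhp]
  obtain ⟨s, t, h1, h2, h3, h4⟩ := exact_image_core hpq hcd hgc hgp hgq
  refine ⟨p + q - t, p + q - s, by linarith, by linarith, by linarith, ?_⟩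
  have : h '' ((fun z : ℝ => p + q - z) '' Icc s t) = Icc c d := by
    rw [← Set.image_comp]; exact h4
  rwa [Set.image_const_sub_Icc] at this

/-- Onto-subinterval lemma: if a compact interval's image under a continuous map
contains `[c,d]`, some compact subinterval maps exactly onto `[c,d]`. -/
lemma exact_image {h : ℝ → ℝ} {x y c d : ℝ} (hxy : x ≤ y) (hcd : c ≤ d)
    (hc : ContinuousOn h (Icc x y)) (hsub : Icc c d ⊆ h '' (Icc x y)) :
    ∃ s t, x ≤ s ∧ s ≤ t ∧ t ≤ y ∧ h '' (Icc s t) = Icc c d := by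
  obtain ⟨u, hu, hhu⟩ := hsub (left_mem_Icc.2 hcd)
  obtain ⟨v, hv, hhv⟩ := hsub (right_mem_Icc.2 hcd)
  rcases le_total u v with huv | hvu
  · obtain ⟨s, t, h1, h2, h3, h4⟩ := exact_image_core huv hcd
      (hc.mono (Icc_subset_Icc hu.1 hv.2)) hhu hhv
    exact ⟨s, t, hu.1.trans h1, h2, h3.trans hv.2, h4⟩
  · obtain ⟨s, t, h1, h2, h3, h4⟩ := exact_image_core' hvu hcd
      (hc.mono (Icc_subset_Icc hv.1 hu.2)) hhv hhu
    exact ⟨s, t, hv.1.trans h1, h2, h3.trans hu.2, h4⟩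


lemma iter_contOn {f : ℝ → ℝ} {a b : ℝ} (hf : ContinuousOn f (Icc a b))
    (hmaps : MapsTo f (Icc a b) (Icc a b)) (n : ℕ) :
    ContinuousOn f^[n] (Icc a b) := by
  induction n with
  | zero => simpa using continuousOn_id
  | succ n ih =>
    rw [Function.iterate_succ']
    exact hf.comp ih (hmaps.iterate n)

/-- Itinerary construction: given two intervals each covering both under `T`,
for any itinerary there is a subinterval realizing it. -/
lemma itinerary {f : ℝ → ℝ} {a b : ℝ} (hf : ContinuousOn f (Icc a b))
    (hmaps : MapsTo f (Icc a b) (Icc a b)) {n₀ : ℕ}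
    {α β γ δ : ℝ} (h1 : α ≤ β) (h2 : γ ≤ δ)
    (hA : Icc α β ⊆ Icc a b) (hB : Icc γ δ ⊆ Icc a b)
    (hcovA : Icc α β ⊆ f^[n₀] '' (Icc α β) ∧ Icc γ δ ⊆ f^[n₀] '' (Icc α β))
    (hcovB : Icc α β ⊆ f^[n₀] '' (Icc γ δ) ∧ Icc γ δ ⊆ f^[n₀] '' (Icc γ δ))
    (k : ℕ) (w : ℕ → Bool) :
    ∃ z : ℝ, ∀ i ≤ k, (f^[n₀])^[i] z ∈ (if w i then Icc γ δ else Icc α β) := by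
  set C : Bool → Set ℝ := fun c => if c then Icc γ δ else Icc α β with hC
  set T := f^[n₀] with hT
  have hCsub : ∀ c, C c ⊆ Icc a b := by intro c; cases c <;> simpa [hC] using by assumption
  have hCcov : ∀ c c', C c' ⊆ T '' (C c) := by
    intro c c'; cases c <;> cases c' <;> simp [hC, hT] <;> tauto
  have hCint : ∀ c, ∃ u v : ℝ, u ≤ v ∧ C c = Icc u v := by
    intro c; cases c
    · exact ⟨α, β, h1, by simp [hC]⟩
    · exact ⟨γ, δ, h2, by simp [hC]⟩
  have hTcont : ∀ c, ContinuousOn T (C c) := fun c =>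
    (iter_contOn hf hmaps n₀).mono (hCsub c)
  -- main induction
  have main : ∀ k : ℕ, ∀ w : ℕ → Bool, ∃ s t : ℝ, s ≤ t ∧ Icc s t ⊆ C (w 0) ∧
      (∀ i ≤ k, T^[i] '' Icc s t ⊆ C (w i)) ∧ T^[k] '' Icc s t = C (w k) := by
    intro k
    induction k with
    | zero =>
      intro w
      obtain ⟨u, v, huv, hEq⟩ := hCint (w 0)
      exact ⟨u, v, huv, hEq ▸ Subset.rfl, by
        intro i hi; interval_cases i; simp [hEq],
        by simp [hEq]⟩
    | succ k ih =>
      intro w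
      obtain ⟨s', t', hst', hsub', hall', hend'⟩ := ih (fun i => w (i + 1))
      obtain ⟨u, v, huv, hEq⟩ := hCint (w 0)
      have hcov : Icc s' t' ⊆ T '' (Icc u v) := by
        rw [← hEq]
        exact hsub'.trans (hCcov (w 0) (w 1))
      obtain ⟨s, t, hus, hst, htv, himg⟩ := exact_image huv hst'
        (hEq ▸ hTcont (w 0)) hcov
      refine ⟨s, t, hst, ?_, ?_, ?_⟩
      · rw [hEq]; exact Icc_subset_Icc hus htv
      · intro i hi
        match i, hi with
        | 0, _ =>
          have : Icc s t ⊆ C (w 0) := by rw [hEq]; exact Icc_subset_Icc hus htv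
          simpa using this
        | (i+1), hi =>
          have : T^[i+1] '' Icc s t = T^[i] '' (Icc s' t') := by
            rw [Function.iterate_succ, Set.image_comp, himg]
          rw [this]
          exact hall' i (Nat.succ_le_succ_iff.mp hi)
      · have : T^[k+1] '' Icc s t = T^[k] '' (Icc s' t') := by
          rw [Function.iterate_succ, Set.image_comp, himg]
        rw [this]; exact hend'
  obtain ⟨s, t, hst, hsub, hall, _⟩ := main k w
  exact ⟨s, fun i hi => hall i hi ⟨s, left_mem_Icc.2 hst, rfl⟩⟩


lemma iter_contOn' {f : ℝ → ℝ} {a b : ℝ} (hf : ContinuousOn f (Icc a b))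
    (hmaps : MapsTo f (Icc a b) (Icc a b)) (n : ℕ) :
    ContinuousOn f^[n] (Icc a b) := by
  induction n with
  | zero => simpa using continuousOn_id
  | succ n ih => rw [Function.iterate_succ']; exact hf.comp ih (hmaps.iterate n)

lemma odd_period_three_interval {g : ℝ → ℝ} {a b : ℝ} (hg : ContinuousOn g (Icc a b))
    (hmaps : MapsTo g (Icc a b) (Icc a b)) {p : ℝ} (hp : p ∈ Icc a b) {q : ℕ}
    (hq3 : 3 ≤ q) (hodd : Odd q) (hper : g^[q] p = p)
    (hprim : ∀ j, 0 < j → j < q → g^[j] p ≠ p) :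
    ∃ N : ℕ, 0 < N ∧ ∃ x₀ x₁ x₂ : ℝ, x₀ < x₁ ∧ x₁ < x₂ ∧ x₀ ∈ Icc a b ∧ x₂ ∈ Icc a b ∧
      Icc x₀ x₂ ⊆ g^[N] '' (Icc x₀ x₁) ∧ Icc x₀ x₂ ⊆ g^[N] '' (Icc x₁ x₂) := by
  classical
  have hq0 : 0 < q := by omega
  set pts : ℕ → ℝ := fun i => g^[i] p with hpts
  have hper' : ∀ i, pts (i + q) = pts i := by
    intro i; simp only [hpts]; rw [Function.iterate_add_apply, hper]
  have hmod : ∀ i, pts i = pts (i % q) := by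
    intro i
    induction i using Nat.strong_induction_on with
    | _ i ih =>
      by_cases h : i < q
      · rw [Nat.mod_eq_of_lt h]
      · obtain ⟨j, rfl⟩ : ∃ j, i = j + q := ⟨i - q, by omega⟩
        rw [hper' j, ih j (by omega), Nat.add_mod_right]
  set P : Finset ℝ := Finset.image pts (Finset.range q) with hP
  have hPne : P.Nonempty := ⟨p, by
    simp only [hP, Finset.mem_image]; exact ⟨0, Finset.mem_range.2 hq0, rfl⟩⟩
  have hmemP : ∀ x, x ∈ P ↔ ∃ i, i < q ∧ pts i = x := by
    intro x
    simp only [hP, Finset.mem_image, Finset.mem_range]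
  have hPIcc : ∀ x ∈ P, x ∈ Icc a b := by
    intro x hx
    obtain ⟨i, hi, rfl⟩ := (hmemP x).1 hx
    exact hmaps.iterate i hp
  have hgP : ∀ x ∈ P, g x ∈ P := by
    intro x hx
    obtain ⟨i, hi, rfl⟩ := (hmemP x).1 hx
    refine (hmemP _).2 ⟨(i+1) % q, Nat.mod_lt _ hq0, ?_⟩
    rw [← hmod (i+1)]
    simp only [hpts]
    rw [Function.iterate_succ_apply']
  have hiterP : ∀ x ∈ P, ∀ s : ℕ, g^[s] x ∈ P := by
    intro x hx s
    induction s with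
    | zero => simpa using hx
    | succ s ih => rw [Function.iterate_succ_apply']; exact hgP _ ih
  have hfix : ∀ x ∈ P, g x ≠ x := by
    intro x hx hgx
    obtain ⟨i, hi, rfl⟩ := (hmemP x).1 hx
    have hall : ∀ k, g^[k] (pts i) = pts i := by
      intro k
      induction k with
      | zero => rfl
      | succ k ih => rw [Function.iterate_succ_apply', ih, hgx]
    have hpq : pts q = p := hper
    have : pts q = pts i := by
      have : g^[q - i] (pts i) = pts q := by
        simp only [hpts]
        rw [← Function.iterate_add_apply]
        congr 1; omega
      rw [← this, hall]
    have hpi : p = pts i := by rw [← hpq, this]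
    have : g^[1] p = p := by
      simp only [Function.iterate_one]
      rw [hpi, hgx]
    exact hprim 1 one_pos (by omega) this
  have htrans : ∀ x ∈ P, ∀ y ∈ P, ∃ s, s ≤ q - 1 ∧ g^[s] x = y := by
    intro x hx y hy
    obtain ⟨i, hi, rfl⟩ := (hmemP x).1 hx
    obtain ⟨j, hj, rfl⟩ := (hmemP y).1 hy
    by_cases hij : i ≤ j
    · refine ⟨j - i, by omega, ?_⟩
      simp only [hpts]
      rw [← Function.iterate_add_apply]
      congr 1; omega
    · refine ⟨q + j - i, by omega, ?_⟩
      simp only [hpts]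
      rw [← Function.iterate_add_apply]
      have he : q + j - i + i = j + q := by omega
      rw [he]
      exact hper' j
  -- the "center gap" of the orbit
  set S : Finset ℝ := P.filter (fun x => x < g x) with hS
  have hSne : S.Nonempty := by
    refine ⟨P.min' hPne, Finset.mem_filter.2 ⟨P.min'_mem hPne, ?_⟩⟩
    have h1 : g (P.min' hPne) ∈ P := hgP _ (P.min'_mem hPne)
    have h2 : g (P.min' hPne) ≠ P.min' hPne := hfix _ (P.min'_mem hPne)
    exact lt_of_le_of_ne (P.min'_le _ h1) (Ne.symm h2)
  set c : ℝ := S.max' hSne with hc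
  have hcP : c ∈ P := (Finset.mem_filter.1 (S.max'_mem hSne)).1
  have hcg : c < g c := (Finset.mem_filter.1 (S.max'_mem hSne)).2
  set D : Finset ℝ := P.filter (fun x => c < x) with hD
  have hDne : D.Nonempty := by
    refine ⟨P.max' hPne, Finset.mem_filter.2 ⟨P.max'_mem hPne, ?_⟩⟩
    have h1 : g (P.max' hPne) ∈ P := hgP _ (P.max'_mem hPne)
    have h2 : g (P.max' hPne) ≠ P.max' hPne := hfix _ (P.max'_mem hPne)
    have hmaxnS : P.max' hPne ∉ S := by
      intro hmem
      have := (Finset.mem_filter.1 hmem).2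
      exact absurd (Finset.le_max' P _ h1) (not_le.2 this)
    have : c ≠ P.max' hPne := fun he => hmaxnS (he ▸ S.max'_mem hSne)
    exact lt_of_le_of_ne (Finset.le_max' P c hcP) this
  set d : ℝ := D.min' hDne with hd
  have hdP : d ∈ P := (Finset.mem_filter.1 (D.min'_mem hDne)).1
  have hcd : c < d := (Finset.mem_filter.1 (D.min'_mem hDne)).2
  have hgcd : d ≤ g c := D.min'_le _ (Finset.mem_filter.2 ⟨hgP _ hcP, hcg⟩)
  have hgdc : g d ≤ c := by
    have hdnS : d ∉ S := by
      intro hmem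
      exact absurd (S.le_max' _ hmem) (not_le.2 hcd)
    have h1 : ¬ (d < g d) := fun hlt => hdnS (Finset.mem_filter.2 ⟨hdP, hlt⟩)
    have h2 : g d ≠ d := hfix _ hdP
    have h3 : g d < d := lt_of_le_of_ne (not_lt.1 h1) h2
    by_contra hcon
    push_neg at hcon
    exact absurd (D.min'_le _ (Finset.mem_filter.2 ⟨hgP _ hdP, hcon⟩)) (not_le.2 h3)
  have hside : ∀ x ∈ P, x ≤ c ∨ d ≤ x := by
    intro x hx
    by_cases h : x ≤ c
    · exact Or.inl h
    · exact Or.inr (D.min'_le _ (Finset.mem_filter.2 ⟨hx, not_le.1 h⟩))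
  -- same-side pair
  have hpair : ∃ x ∈ P, (x ≤ c ∧ g x ≤ c) ∨ (d ≤ x ∧ d ≤ g x) := by
    by_contra hno
    push_neg at hno
    have halt : ∀ i, (pts (i+1) ≤ c ↔ ¬ (pts i ≤ c)) := by
      intro i
      have hpi : pts i ∈ P := by rw [hmod i]; exact (hmemP _).2 ⟨i % q, Nat.mod_lt _ hq0, rfl⟩
      have hstep : g (pts i) = pts (i+1) := by
        simp only [hpts]; rw [Function.iterate_succ_apply']
      have := hno (pts i) hpi
      rw [hstep] at this
      have hgi : pts (i+1) ∈ P := by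
        rw [hmod (i+1)]; exact (hmemP _).2 ⟨(i+1) % q, Nat.mod_lt _ hq0, rfl⟩
      rcases hside _ hpi with h1 | h1 <;> rcases hside _ hgi with h2 | h2
      · exact absurd h2 (not_le.2 (this.1 h1))
      · constructor
        · intro hle; exact absurd hle (not_le.2 (lt_of_lt_of_le hcd h2))
        · intro hnle; exact absurd h1 hnle
      · constructor
        · intro _; exact not_le.2 (lt_of_lt_of_le hcd h1)
        · intro _; exact h2
      · exact absurd h2 (not_le.2 (this.2 h1))
    have hconst : ∀ i, (pts i ≤ c ↔ (pts 0 ≤ c ↔ Even i)) := by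
      intro i
      induction i with
      | zero => simp
      | succ i ih =>
        rw [halt i, ih, Nat.even_add_one]
        tauto
    have hq_eq : pts q = pts 0 := hper
    have := hconst q
    rw [hq_eq] at this
    have hqodd : ¬ Even q := Nat.not_even_iff_odd.2 hodd
    tauto
  -- coverings
  have hcdab : Icc c d ⊆ Icc a b := Icc_subset_Icc (hPIcc c hcP).1 (hPIcc d hdP).2
  have hcover1 : Icc c d ⊆ g '' (Icc c d) := by
    have h1 := intermediate_value_Icc' hcd.le (hg.mono hcdab)
    exact (Icc_subset_Icc hgdc hgcd).trans h1
  have hstepm : ∀ t : ℕ, g^[t] '' (Icc c d) ⊆ g^[t+1] '' (Icc c d) := by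
    intro t
    rw [Function.iterate_succ, Set.image_comp]
    exact Set.image_mono hcover1
  have hmono2 : ∀ t t' : ℕ, t ≤ t' → g^[t] '' (Icc c d) ⊆ g^[t'] '' (Icc c d) := by
    intro t t' htt
    induction t', htt using Nat.le_induction with
    | base => exact Subset.rfl
    | succ t' htt ih => exact ih.trans (hstepm t')
  have hcovP : ∀ x ∈ P, x ∈ g^[q-1] '' (Icc c d) := by
    intro x hx
    obtain ⟨s, hs, hgs⟩ := htrans c hcP x hx
    have hmem : g^[s] c ∈ g^[s] '' (Icc c d) :=
      Set.mem_image_of_mem _ ⟨le_rfl, hcd.le⟩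
    rw [hgs] at hmem
    exact hmono2 s (q-1) hs hmem
  set minP := P.min' hPne with hminP
  set maxP := P.max' hPne with hmaxP
  have hfullP : Icc minP maxP ⊆ g^[q-1] '' (Icc c d) := by
    have hconn : IsPreconnected (g^[q-1] '' (Icc c d)) :=
      isPreconnected_Icc.image _ ((iter_contOn' hg hmaps (q-1)).mono hcdab)
    exact hconn.Icc_subset (hcovP _ (P.min'_mem hPne)) (hcovP _ (P.max'_mem hPne))
  -- same-side pair gives wide interval
  obtain ⟨x, hxP, hxcase⟩ := hpair
  set y := g x with hy
  have hyP : y ∈ P := hgP _ hxP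
  have hxy : x ≠ y := fun he => hfix _ hxP he.symm
  set u := min x y with hu
  set v := max x y with hv
  have huv : u < v := min_lt_max.2 hxy
  have huP : u ∈ P := by rcases min_choice x y with h | h <;> rw [hu, h] <;> assumption
  have hvP : v ∈ P := by rcases max_choice x y with h | h <;> rw [hv, h] <;> assumption
  have hopp : ∃ s : ℕ, ¬ ((g^[s] x ≤ c) ↔ (g^[s] y ≤ c)) := by
    by_contra hsame
    push_neg at hsame
    have hBstep : ∀ s, (g^[s+1] x ≤ c ↔ g^[s] x ≤ c) := by
      intro s
      have : g^[s] y = g^[s+1] x := by rw [hy, Function.iterate_succ_apply]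
      rw [← this]
      exact (hsame s).symm
    have hBall : ∀ s, (g^[s] x ≤ c ↔ x ≤ c) := by
      intro s
      induction s with
      | zero => simp
      | succ s ih => rw [hBstep s, ih]
    obtain ⟨s1, _, he1⟩ := htrans x hxP c hcP
    obtain ⟨s2, _, he2⟩ := htrans x hxP d hdP
    have t1 : g^[s1] x ≤ c := le_of_eq he1
    have t2 : ¬ (g^[s2] x ≤ c) := by rw [he2]; exact not_le.2 hcd
    rw [hBall s1] at t1
    rw [hBall s2] at t2
    exact t2 t1
  obtain ⟨s, hs⟩ := hopp
  set w1 := g^[s] x with hw1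
  set w2 := g^[s] y with hw2
  have hw1P : w1 ∈ P := hiterP _ hxP s
  have hw2P : w2 ∈ P := hiterP _ hyP s
  have hstraddle : (w1 ≤ c ∧ d ≤ w2) ∨ (w2 ≤ c ∧ d ≤ w1) := by
    rcases hside _ hw1P with h1 | h1 <;> rcases hside _ hw2P with h2 | h2
    · exact absurd ⟨fun _ => h2, fun _ => h1⟩ hs
    · exact Or.inl ⟨h1, h2⟩
    · exact Or.inr ⟨h2, h1⟩
    · refine absurd ⟨fun hle => absurd hle (not_le.2 (lt_of_lt_of_le hcd h1)), ?_⟩ hs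
      intro hle; exact absurd hle (not_le.2 (lt_of_lt_of_le hcd h2))
  have hxyab : uIcc x y ⊆ Icc a b := uIcc_subset_Icc (hPIcc _ hxP) (hPIcc _ hyP)
  have hivt := intermediate_value_uIcc ((iter_contOn' hg hmaps s).mono hxyab)
  have hcds : Icc c d ⊆ g^[s] '' (Icc u v) := by
    have hsub1 : Icc c d ⊆ uIcc w1 w2 := by
      rw [Set.uIcc]
      rcases hstraddle with ⟨ha1, ha2⟩ | ⟨ha1, ha2⟩
      · exact Icc_subset_Icc (le_trans inf_le_left ha1) (le_trans ha2 le_sup_right)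
      · exact Icc_subset_Icc (le_trans inf_le_right ha1) (le_trans ha2 le_sup_left)
    have huvIcc : uIcc x y = Icc u v := by simp [Set.uIcc, hu, hv]
    rw [← huvIcc]
    exact hsub1.trans hivt
  set N := (q - 1) + s with hN
  have hN0 : 0 < N := by omega
  have hcoverB : Icc minP maxP ⊆ g^[N] '' (Icc u v) := by
    rw [hN, Function.iterate_add, Set.image_comp]
    exact hfullP.trans (Set.image_mono hcds)
  have hcoverA : Icc minP maxP ⊆ g^[N] '' (Icc c d) :=
    hfullP.trans (hmono2 (q-1) N (by omega))
  have hminle : ∀ x ∈ P, minP ≤ x := fun x hx => P.min'_le x hx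
  have hmaxge : ∀ x ∈ P, x ≤ maxP := fun x hx => P.le_max' x hx
  rcases hxcase with ⟨hx1, hx2⟩ | ⟨hx1, hx2⟩
  · -- both left of gap : u < v ≤ c
    have hvc : v ≤ c := max_le hx1 hx2
    refine ⟨N, hN0, u, c, d, lt_of_lt_of_le huv hvc, hcd, hPIcc _ huP, hPIcc _ hdP, ?_, ?_⟩
    · have hsub : Icc u d ⊆ Icc minP maxP := Icc_subset_Icc (hminle _ huP) (hmaxge _ hdP)
      refine (hsub.trans hcoverB).trans (Set.image_mono (Icc_subset_Icc le_rfl hvc))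
    · exact (Icc_subset_Icc (hminle _ huP) (hmaxge _ hdP)).trans hcoverA
  · -- both right of gap : d ≤ u < v
    have hdu : d ≤ u := le_min hx1 hx2
    refine ⟨N, hN0, c, d, v, hcd, lt_of_le_of_lt hdu huv, hPIcc _ hcP, hPIcc _ hvP, ?_, ?_⟩
    · exact (Icc_subset_Icc (hminle _ hcP) (hmaxge _ hvP)).trans hcoverA
    · have hsub : Icc c v ⊆ Icc minP maxP := Icc_subset_Icc (hminle _ hcP) (hmaxge _ hvP)
      refine (hsub.trans hcoverB).trans (Set.image_mono (Icc_subset_Icc hdu le_rfl))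


lemma cover_of_preimages {h : ℝ → ℝ} {u v c d : ℝ} (hcd : c ≤ d)
    (hc : ContinuousOn h (uIcc u v)) (h0 : h u = c) (h2 : h v = d) :
    Icc c d ⊆ h '' (Icc (min u v) (max u v)) := by
  have key := intermediate_value_uIcc hc
  rw [h0, h2] at key
  have : Icc c d ⊆ uIcc c d := Icc_subset_uIcc
  refine (this.trans key).trans ?_
  rw [show Icc (min u v) (max u v) = uIcc u v by simp [uIcc]]

lemma three_interval_horseshoe {h : ℝ → ℝ} {x₀ x₁ x₂ : ℝ} (h01 : x₀ < x₁) (h12 : x₁ < x₂)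
    (hc : ContinuousOn h (Icc x₀ x₂))
    (hJ : Icc x₀ x₂ ⊆ h '' (Icc x₀ x₁)) (hK : Icc x₀ x₂ ⊆ h '' (Icc x₁ x₂)) :
    ∃ M : ℕ, 0 < M ∧ M ≤ 2 ∧ ∃ α β γ δ : ℝ, x₀ ≤ α ∧ α ≤ β ∧ β < γ ∧ γ ≤ δ ∧ δ ≤ x₂ ∧
      Icc x₀ x₂ ⊆ h^[M] '' (Icc α β) ∧ Icc x₀ x₂ ⊆ h^[M] '' (Icc γ δ) := by
  have h02 : x₀ ≤ x₂ := (h01.trans h12).le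
  have hJsub : Icc x₀ x₁ ⊆ Icc x₀ x₂ := Icc_subset_Icc le_rfl h12.le
  have hKsub : Icc x₁ x₂ ⊆ Icc x₀ x₂ := Icc_subset_Icc h01.le le_rfl
  have hcJ : ContinuousOn h (Icc x₀ x₁) := hc.mono hJsub
  have hcK : ContinuousOn h (Icc x₁ x₂) := hc.mono hKsub
  have hiter2 : ∀ S : Set ℝ, h^[2] '' S = h '' (h '' S) := by
    intro S
    rw [show (2:ℕ) = 1 + 1 by rfl, Function.iterate_succ', Function.iterate_one, Set.image_comp]
  have hfull : Icc x₀ x₂ ⊆ h '' (Icc x₀ x₂) :=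
    hJ.trans (Set.image_mono (f := h) hJsub)
  by_cases hx₁ : h x₁ ≠ x₀ ∧ h x₁ ≠ x₂
  · -- M = 1 : preimages of extremes avoid x₁
    obtain ⟨w0, hw0, hhw0⟩ := hJ (left_mem_Icc.2 h02)
    obtain ⟨w2, hw2, hhw2⟩ := hJ (right_mem_Icc.2 h02)
    obtain ⟨w0', hw0', hhw0'⟩ := hK (left_mem_Icc.2 h02)
    obtain ⟨w2', hw2', hhw2'⟩ := hK (right_mem_Icc.2 h02)
    have hw0lt : w0 < x₁ := lt_of_le_of_ne hw0.2 (fun he => hx₁.1 (by rw [← he]; exact hhw0))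
    have hw2lt : w2 < x₁ := lt_of_le_of_ne hw2.2 (fun he => hx₁.2 (by rw [← he]; exact hhw2))
    have hw0gt : x₁ < w0' := lt_of_le_of_ne hw0'.1 (fun he => hx₁.1 (by rw [he]; exact hhw0'))
    have hw2gt : x₁ < w2' := lt_of_le_of_ne hw2'.1 (fun he => hx₁.2 (by rw [he]; exact hhw2'))
    refine ⟨1, one_pos, one_le_two, min w0 w2, max w0 w2, min w0' w2', max w0' w2',
      le_min hw0.1 hw2.1, min_le_max, (max_lt hw0lt hw2lt).trans_le (le_min hw0gt.le hw2gt.le),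
      min_le_max, max_le hw0'.2 hw2'.2, ?_, ?_⟩
    · have hsub : uIcc w0 w2 ⊆ Icc x₀ x₁ := uIcc_subset_Icc hw0 hw2
      have := cover_of_preimages h02 (hcJ.mono hsub) hhw0 hhw2
      simpa using this
    · have hsub : uIcc w0' w2' ⊆ Icc x₁ x₂ := uIcc_subset_Icc hw0' hw2'
      have := cover_of_preimages h02 (hcK.mono hsub) hhw0' hhw2'
      simpa using this
  · -- M = 2
    push_neg at hx₁
    obtain ⟨s, t, hs, hst, ht, himgJ⟩ := exact_image h01.le h02 hcJ hJ
    obtain ⟨s', t', hs', hst', ht', himgK⟩ := exact_image h12.le h02 hcK hK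
    have hsubK : Icc s' t' ⊆ Icc x₀ x₂ := (Icc_subset_Icc hs' ht').trans hKsub
    have hsubJ : Icc s t ⊆ Icc x₀ x₂ := (Icc_subset_Icc hs ht).trans hJsub
    have hcst : ContinuousOn h (Icc s t) := hc.mono hsubJ
    by_cases hcase : h x₁ = x₀
    · -- A' ⊆ [s,t] with image [s',t']
      obtain ⟨α, β, hα, hαβ, hβ, himgA⟩ := exact_image hst hst' hcst (himgJ ▸ hsubK)
      have hβlt : β < x₁ := by
        rcases lt_or_eq_of_le ((hβ.trans ht) : β ≤ x₁) with hlt | heq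
        · exact hlt
        · exfalso
          have hx₁mem : x₁ ∈ Icc α β := ⟨heq ▸ hαβ, heq.ge⟩
          have : h x₁ ∈ Icc s' t' := himgA ▸ Set.mem_image_of_mem h hx₁mem
          rw [hcase] at this
          exact absurd (le_trans hs' this.1) (not_le.2 h01)
      refine ⟨2, two_pos, le_rfl, α, β, s', t', hs.trans hα, hαβ,
        hβlt.trans_le hs', hst', ht', ?_, ?_⟩
      · rw [hiter2, himgA, himgK]
      · rw [hiter2, himgK]
        exact hfull
    · have hcase2 : h x₁ = x₂ := hx₁ hcase
      -- A' ⊆ [s,t] with image [s,t] itself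
      obtain ⟨α, β, hα, hαβ, hβ, himgA⟩ := exact_image hst hst hcst (himgJ ▸ hsubJ)
      have hβlt : β < x₁ := by
        rcases lt_or_eq_of_le ((hβ.trans ht) : β ≤ x₁) with hlt | heq
        · exact hlt
        · exfalso
          have hx₁mem : x₁ ∈ Icc α β := ⟨heq ▸ hαβ, heq.ge⟩
          have : h x₁ ∈ Icc s t := himgA ▸ Set.mem_image_of_mem h hx₁mem
          rw [hcase2] at this
          exact absurd (this.2.trans ht) (not_le.2 h12)
      refine ⟨2, two_pos, le_rfl, α, β, s', t', hs.trans hα, hαβ,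
        hβlt.trans_le hs', hst', ht', ?_, ?_⟩
      · rw [hiter2, himgA, himgJ]
      · rw [hiter2, himgK]
        exact hfull


lemma horseshoe_entropy {f : ℝ → ℝ} {a b : ℝ} (hf : ContinuousOn f (Icc a b))
    (hmaps : MapsTo f (Icc a b) (Icc a b)) {n₀ : ℕ} (hn₀ : 0 < n₀)
    {α β γ δ : ℝ} (h1 : α ≤ β) (h2 : γ ≤ δ) (hgap : β < γ)
    (hA : Icc α β ⊆ Icc a b) (hB : Icc γ δ ⊆ Icc a b)
    (hcovA : Icc α β ⊆ f^[n₀] '' (Icc α β) ∧ Icc γ δ ⊆ f^[n₀] '' (Icc α β))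
    (hcovB : Icc α β ⊆ f^[n₀] '' (Icc γ δ) ∧ Icc γ δ ⊆ f^[n₀] '' (Icc γ δ)) :
    ((Real.log 2 / n₀ : ℝ) : EReal) ≤ coverEntropy f (Icc a b) := by
  classical
  set F := Icc a b with hF
  set ε := γ - β with hε
  have hεpos : 0 < ε := by simp [hε]; linarith
  set U : Set (ℝ × ℝ) := {q | dist q.1 q.2 < ε/2} with hU
  have hUuni : U ∈ uniformity ℝ := Metric.dist_mem_uniformity (by positivity)
  -- separation of the two intervals
  have hsep : ∀ x ∈ Icc α β, ∀ y ∈ Icc γ δ, ε ≤ dist x y := by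
    intro x hx y hy
    rw [Real.dist_eq, abs_sub_comm, abs_of_nonneg (by linarith [hx.2, hy.1])]
    linarith [hx.2, hy.1]
  -- cardinality bound
  have hcard : ∀ k : ℕ, (2 : ℕ∞) ^ (k+1) ≤ netMaxcard f F U (n₀ * k + 1) := by
    intro k
    set we : (Fin (k+1) → Bool) → ℕ → Bool :=
      fun w i => if h : i < k + 1 then w ⟨i, h⟩ else false with hwe
    have hφ : ∀ w : Fin (k+1) → Bool, ∃ z : ℝ,
        ∀ i ≤ k, (f^[n₀])^[i] z ∈ (if we w i then Icc γ δ else Icc α β) :=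
      fun w => itinerary hf hmaps h1 h2 hA hB hcovA hcovB k (we w)
    choose φ hφ using hφ
    -- key separation: differing words give far orbits
    have hkey : ∀ w w' : Fin (k+1) → Bool, w ≠ w' →
        ∃ i : ℕ, i ≤ k ∧ ε ≤ dist (f^[n₀ * i] (φ w)) (f^[n₀ * i] (φ w')) := by
      intro w w' hne
      obtain ⟨j, hj⟩ := Function.ne_iff.1 hne
      have hjk : (j : ℕ) ≤ k := Nat.lt_succ_iff.mp j.2
      refine ⟨j, hjk, ?_⟩
      have e1 := hφ w j hjk
      have e2 := hφ w' j hjk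
      have hwej : we w j = w j := by simp [hwe, j.2, hjk]
      have hwej' : we w' j = w' j := by simp [hwe, j.2, hjk]
      rw [hwej] at e1; rw [hwej'] at e2
      rw [Function.iterate_mul]
      cases hb : w j <;> cases hb' : w' j
      · exact absurd (hb.trans hb'.symm) hj
      · rw [hb] at e1; rw [hb'] at e2
        simp only [Bool.false_eq_true, if_false, if_true] at e1 e2
        exact hsep _ e1 _ e2
      · rw [hb] at e1; rw [hb'] at e2
        simp only [Bool.false_eq_true, if_false, if_true] at e1 e2
        rw [dist_comm]
        exact hsep _ e2 _ e1
      · exact absurd (hb.trans hb'.symm) hj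
    have hφinj : Function.Injective φ := by
      intro w w' he
      by_contra hne
      obtain ⟨i, _, hd⟩ := hkey w w' hne
      rw [he, dist_self] at hd
      linarith
    set s : Finset ℝ := Finset.image φ Finset.univ with hs
    have hsnet : IsDynNetIn f F U (n₀ * k + 1) ↑s := by
      constructor
      · intro x hx
        simp only [hs, Finset.coe_image, Set.mem_image] at hx
        obtain ⟨w, _, rfl⟩ := hx
        have := hφ w 0 (Nat.zero_le k)
        simp only [Function.iterate_zero, id_eq] at this
        rcases h0 : we w 0
        · rw [h0] at this
          simp only [Bool.false_eq_true, if_false] at this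
          exact hA this
        · rw [h0] at this
          simp only [if_true] at this
          exact hB this
      · intro x hx y hy hxy
        simp only [hs, Finset.coe_image, Set.mem_image] at hx hy
        obtain ⟨w, _, rfl⟩ := hx
        obtain ⟨w', _, rfl⟩ := hy
        have hne : w ≠ w' := fun h => hxy (by rw [h])
        obtain ⟨i, hik, hd⟩ := hkey w w' hne
        simp only [Function.onFun]
        rw [Set.disjoint_left]
        intro z hz1 hz2
        rw [ball, Set.mem_preimage, mem_dynEntourage] at hz1 hz2
        have hlt : n₀ * i < n₀ * k + 1 := by
          have := Nat.mul_le_mul_left n₀ hik; omega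
        have d1 := hz1 (n₀ * i) hlt
        have d2 := hz2 (n₀ * i) hlt
        simp only [hU, Set.mem_setOf_eq] at d1 d2
        have : dist (f^[n₀*i] (φ w)) (f^[n₀*i] (φ w')) < ε := by
          calc dist (f^[n₀*i] (φ w)) (f^[n₀*i] (φ w'))
              ≤ dist (f^[n₀*i] (φ w)) (f^[n₀*i] z) + dist (f^[n₀*i] z) (f^[n₀*i] (φ w')) :=
                dist_triangle _ _ _
            _ < ε/2 + ε/2 := by rw [dist_comm] at d2; exact add_lt_add d1 d2
            _ = ε := by ring
        linarith
    have hcardeq : s.card = 2 ^ (k+1) := by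
      rw [hs, Finset.card_image_of_injective _ hφinj]
      simp [Finset.card_univ]
    have := hsnet.card_le_netMaxcard
    rw [hcardeq] at this
    calc (2:ℕ∞) ^ (k+1) = ((2^(k+1) : ℕ) : ℕ∞) := by push_cast; ring
      _ ≤ _ := this
  -- entropy bound
  have hbound : ∀ n : ℕ, 1 ≤ n →
      ((Real.log 2 / n₀ : ℝ) : EReal) ≤ log (netMaxcard f F U n) / (n : EReal) := by
    intro n hn
    obtain ⟨n', rfl⟩ : ∃ n', n = n' + 1 := ⟨n - 1, by omega⟩
    set n := n' + 1 with hn'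
    set k := n' / n₀ with hk
    have e : n₀ * k + n' % n₀ = n' := Nat.div_add_mod n' n₀
    have m : n' % n₀ < n₀ := Nat.mod_lt n' hn₀
    have hle : n₀ * k + 1 ≤ n := by rw [hn']; linarith [e, Nat.zero_le (n' % n₀)]
    have hge : n ≤ (k + 1) * n₀ := by
      have hr : (k + 1) * n₀ = n₀ * k + n₀ := by ring
      rw [hn', hr]; linarith [e, m]
    have hmc : (2 : ℕ∞) ^ (k+1) ≤ netMaxcard f F U n :=
      (hcard k).trans (netMaxcard_monotone_time f F U hle)
    have hlog : ((k+1 : ℕ) : EReal) * ENNReal.log 2 ≤ log (netMaxcard f F U n) := by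
      have : ((2:ℝ≥0∞) ^ (k+1)) ≤ ((netMaxcard f F U n : ℕ∞) : ℝ≥0∞) := by
        have := ENat.toENNReal_le.2 hmc
        simpa using this
      calc ((k+1 : ℕ) : EReal) * ENNReal.log 2 = log ((2:ℝ≥0∞) ^ (k+1)) := by
            rw [ENNReal.log_pow]
        _ ≤ _ := ENNReal.log_monotone this
    have hlog2 : ENNReal.log 2 = ((Real.log 2 : ℝ) : EReal) := by
      rw [show (2:ℝ≥0∞) = ENNReal.ofReal 2 by norm_num, ENNReal.log_ofReal_of_pos (by norm_num)]
    have hnn : (0:ℝ) < n := by exact_mod_cast hn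
    have hstep1 : ((((k+1 : ℕ) : ℝ) * Real.log 2 / n : ℝ) : EReal) ≤
        log (netMaxcard f F U n) / (n : EReal) := by
      have : ((((k+1:ℕ) : ℝ) * Real.log 2 : ℝ) : EReal) ≤ log (netMaxcard f F U n) := by
        rw [EReal.coe_mul]
        push_cast
        rw [hlog2] at hlog
        exact_mod_cast hlog
      rw [EReal.coe_div]
      rw [show ((n:ℝ) : EReal) = (n : EReal) by norm_cast]
      exact div_le_div_right_of_nonneg (Nat.cast_nonneg' _) this
    refine le_trans ?_ hstep1
    rw [EReal.coe_le_coe_iff]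
    rw [div_le_div_iff₀ (by exact_mod_cast hn₀) hnn]
    have hl2 : (0:ℝ) < Real.log 2 := Real.log_pos (by norm_num)
    have : (n : ℝ) ≤ ((k+1 : ℕ) : ℝ) * (n₀ : ℝ) := by exact_mod_cast hge
    calc Real.log 2 * (n:ℝ) ≤ Real.log 2 * (((k+1:ℕ):ℝ) * n₀) := by nlinarith
      _ = ((k+1:ℕ):ℝ) * Real.log 2 * n₀ := by ring
  -- conclude
  have hliminf : ((Real.log 2 / n₀ : ℝ) : EReal) ≤ netEntropyInfEntourage f F U := by
    apply Filter.le_liminf_of_le ⟨⊤, fun a _ => le_top⟩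
    filter_upwards [eventually_ge_atTop 1] with n hn
    exact hbound n hn
  calc ((Real.log 2 / n₀ : ℝ) : EReal) ≤ netEntropyInfEntourage f F U := hliminf
    _ ≤ coverEntropyInf f F := netEntropyInfEntourage_le_coverEntropyInf f F hUuni
    _ ≤ coverEntropy f F := coverEntropyInf_le_coverEntropy f F


end ZEAux

section Main
open Set ENNReal EReal Filter

/-- If `f` is a continuous interval map with zero topological entropy, then the
primitive period of every periodic point of `f` is a power of `2`. -/
theorem zero_entropy_period_pow_two (a b : ℝ) (f : ℝ → ℝ)
    (hf : ContinuousOn f (Set.Icc a b))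
    (hmaps : Set.MapsTo f (Set.Icc a b) (Set.Icc a b))
    (hent : coverEntropy f (Set.Icc a b) = 0)
    (p : ℝ) (hp : p ∈ Set.Icc a b) (m : ℕ) (hm : 0 < m)
    (hper : f^[m] p = p) (hprim : ∀ k : ℕ, 0 < k → k < m → f^[k] p ≠ p) :
    ∃ n : ℕ, m = 2 ^ n := by
  by_contra hpow
  push_neg at hpow
  set k := m.factorization 2 with hk
  set q := m / 2^k with hq
  have hqm : 2^k * q = m := Nat.ordProj_mul_ordCompl_eq_self m 2
  have hq0 : 0 < q := Nat.ordCompl_pos 2 hm.ne'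
  have hqodd : Odd q := by
    have h2 : ¬ 2 ∣ q := Nat.not_dvd_ordCompl Nat.prime_two hm.ne'
    rw [Nat.odd_iff]; omega
  have hq1 : q ≠ 1 := by
    intro h1
    exact hpow k (by rw [← hqm, h1, mul_one])
  have hq3 : 3 ≤ q := by
    obtain ⟨t, ht⟩ := hqodd; omega
  have h2k0 : 0 < 2^k := by positivity
  -- minimal period is m
  have hIsP : Function.IsPeriodicPt f m p := hper
  have hmin : Function.minimalPeriod f p = m := by
    have hdvd := hIsP.minimalPeriod_dvd
    have hpos : 0 < Function.minimalPeriod f p := hIsP.minimalPeriod_pos hm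
    by_contra hne
    have hlt : Function.minimalPeriod f p < m := lt_of_le_of_ne (Nat.le_of_dvd hm hdvd) hne
    exact hprim _ hpos hlt Function.iterate_minimalPeriod
  set g := f^[2^k] with hg
  have hgc : ContinuousOn g (Set.Icc a b) := iter_contOn hf hmaps _
  have hgm : Set.MapsTo g (Set.Icc a b) (Set.Icc a b) := hmaps.iterate _
  have hgper : g^[q] p = p := by
    rw [hg, ← Function.iterate_mul, hqm]; exact hper
  have hgprim : ∀ j, 0 < j → j < q → g^[j] p ≠ p := by
    intro j hj0 hjq hcon
    have hpp : Function.IsPeriodicPt f (2^k * j) p := by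
      rw [Function.IsPeriodicPt, Function.IsFixedPt, Function.iterate_mul]
      exact hcon
    have hdvd := hpp.minimalPeriod_dvd
    rw [hmin, ← hqm] at hdvd
    have hqj : q ∣ j := (mul_dvd_mul_iff_left (Nat.pos_iff_ne_zero.1 h2k0)).1 hdvd
    have := Nat.le_of_dvd hj0 hqj
    omega
  obtain ⟨N, hN0, x₀, x₁, x₂, h01, h12, hx₀ab, hx₂ab, hcJ, hcK⟩ :=
    odd_period_three_interval hgc hgm hp hq3 hqodd hgper hgprim
  have hIccsub : Set.Icc x₀ x₂ ⊆ Set.Icc a b := Set.Icc_subset_Icc hx₀ab.1 hx₂ab.2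
  have hhc : ContinuousOn (g^[N]) (Set.Icc x₀ x₂) := (iter_contOn hgc hgm N).mono hIccsub
  obtain ⟨M, hM0, hM2, α, β, γ, δ, hα, hαβ, hβγ, hγδ, hδ, hcA, hcB⟩ :=
    three_interval_horseshoe h01 h12 hhc hcJ hcK
  set n₀ := 2^k * N * M with hn₀def
  have hn₀ : 0 < n₀ := Nat.mul_pos (Nat.mul_pos h2k0 hN0) hM0
  have hiter : (g^[N])^[M] = f^[n₀] := by
    rw [hg, ← Function.iterate_mul, ← Function.iterate_mul, hn₀def, mul_assoc]
  have hcA' : Set.Icc x₀ x₂ ⊆ f^[n₀] '' (Set.Icc α β) := by rw [← hiter]; exact hcA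
  have hcB' : Set.Icc x₀ x₂ ⊆ f^[n₀] '' (Set.Icc γ δ) := by rw [← hiter]; exact hcB
  have hAsub : Set.Icc α β ⊆ Set.Icc x₀ x₂ :=
    Set.Icc_subset_Icc hα (hβγ.le.trans (hγδ.trans hδ))
  have hBsub : Set.Icc γ δ ⊆ Set.Icc x₀ x₂ :=
    Set.Icc_subset_Icc (hα.trans (hαβ.trans hβγ.le)) hδ
  have key := horseshoe_entropy hf hmaps hn₀ hαβ hγδ hβγ (hAsub.trans hIccsub)
    (hBsub.trans hIccsub) ⟨hAsub.trans hcA', hBsub.trans hcA'⟩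
    ⟨hAsub.trans hcB', hBsub.trans hcB'⟩
  rw [hent] at key
  have hpos : (0:ℝ) < Real.log 2 / n₀ :=
    div_pos (Real.log_pos one_lt_two) (by exact_mod_cast hn₀)
  have hpos' : (0:EReal) < ((Real.log 2 / n₀ : ℝ) : EReal) := by exact_mod_cast hpos
  exact absurd key (not_le.2 hpos')

end Main
end

section
/- Suppose f is a continuous interval map with zero topological entropy and K is an infinite minimal set for f such that every fiber I_w of the associated binary coding is a single point. Then the sub-flow (K, f|K) is topologically conjugate to the adding machine on Σ = {0,1}^ℕ, and in particular is equicontinuous. -/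
open Dynamics

/-- The adding machine on `Σ = {0,1}^ℕ`: binary addition of `1` with carry. -/
def addM (w : ℕ → Bool) : ℕ → Bool :=
  fun n => xor (w n) (decide (∀ k < n, w k = true))

/-- The adding machine on finite binary words (addition of `1` mod `2ⁿ`). -/
def addW {n : ℕ} (w : Fin n → Bool) : Fin n → Bool :=
  fun k => xor (w k) (decide (∀ j : Fin n, j < k → w j = true))

set_option linter.unusedVariables false

def wval {n : ℕ} (w : Fin n → Bool) : ℕ := ∑ k : Fin n, (w k).toNat * 2 ^ (k : ℕ)

lemma wval_cons {n : ℕ} (b : Bool) (v : Fin n → Bool) :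
    wval (Fin.cons b v) = b.toNat + 2 * wval v := by
  simp only [wval, Fin.sum_univ_succ, Fin.cons_zero, Fin.cons_succ, pow_zero, mul_one,
    Fin.val_succ, pow_succ, Finset.mul_sum]
  simp only [Fin.val_zero, pow_zero, mul_one]
  congr 1
  apply Finset.sum_congr rfl
  intro x _
  ring

lemma wval_lt {n : ℕ} (w : Fin n → Bool) : wval w < 2 ^ n := by
  induction n with
  | zero => simp [wval]
  | succ n ih =>
    rw [← Fin.cons_self_tail w, wval_cons]
    have h1 := ih (Fin.tail w)
    have h2 : (w 0).toNat ≤ 1 := Bool.toNat_le _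
    have : (2:ℕ) ^ (n+1) = 2 * 2 ^ n := by ring
    omega

lemma addW_cons {n : ℕ} (b : Bool) (v : Fin n → Bool) :
    addW (Fin.cons b v) = Fin.cons (!b) (if b then addW v else v) := by
  funext k
  induction k using Fin.cases with
  | zero =>
    simp [addW, Fin.cons_zero]
  | succ k =>
    simp only [addW, Fin.cons_succ]
    cases b with
    | false =>
      have hnot : ¬ (∀ j : Fin (n+1), j < k.succ → (Fin.cons (α := fun _ => Bool) false v) j = true) := by
        intro h
        have := h 0 (Fin.succ_pos k)
        simp at this
      rw [decide_eq_false hnot, Bool.xor_false]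
      simp
    | true =>
      simp only [if_true]
      congr 1
      rw [decide_eq_decide]
      constructor
      · intro h j hj
        have := h j.succ (by simpa [Fin.succ_lt_succ_iff] using hj)
        simpa using this
      · intro h j hj
        induction j using Fin.cases with
        | zero => simp
        | succ j => exact h j (by simpa [Fin.succ_lt_succ_iff] using hj)

lemma wval_inj {n : ℕ} : Function.Injective (wval (n := n)) := by
  induction n with
  | zero => intro w w' _; funext k; exact k.elim0
  | succ n ih =>
    intro w w' h
    rw [← Fin.cons_self_tail w, ← Fin.cons_self_tail w'] at h ⊢
    rw [wval_cons, wval_cons] at h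
    have hb : w 0 = w' 0 := by
      cases hw : w 0 <;> cases hw' : w' 0 <;> simp [hw, hw'] at h ⊢ <;> omega
    have ht : Fin.tail w = Fin.tail w' := by
      apply ih
      cases hw : w 0 <;> cases hw' : w' 0 <;> simp [hw, hw'] at h <;> omega
    rw [hb, ht]

lemma wval_addW {n : ℕ} (w : Fin n → Bool) :
    wval (addW w) = (wval w + 1) % 2 ^ n := by
  induction n with
  | zero =>
    have h1 : wval (addW w) = 0 := by simp [wval]
    have h2 : wval w = 0 := by simp [wval]
    simp [h1, h2]
  | succ n ih =>
    rw [← Fin.cons_self_tail w, addW_cons, wval_cons, wval_cons]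
    cases hw : w 0 with
    | false =>
      simp only [Bool.false_eq_true, if_false, Bool.not_false, Bool.toNat_true, Bool.toNat_false]
      have h1 := wval_lt (Fin.tail w)
      have h2 : (2:ℕ) ^ (n+1) = 2 * 2 ^ n := by ring
      rw [Nat.mod_eq_of_lt (by omega)]
      omega
    | true =>
      simp only [if_true, Bool.not_true, Bool.toNat_true, Bool.toNat_false]
      rw [ih (Fin.tail w)]
      have h2 : (2:ℕ) ^ (n+1) = 2 * 2 ^ n := by ring
      have e1 : 1 + 2 * wval (Fin.tail w) + 1 = 2 * (wval (Fin.tail w) + 1) := by ring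
      rw [e1, h2, Nat.mul_mod_mul_left]
      omega

lemma wval_iter {n : ℕ} (m : ℕ) (w : Fin n → Bool) :
    wval (addW^[m] w) = (wval w + m) % 2 ^ n := by
  induction m with
  | zero => simpa using (Nat.mod_eq_of_lt (wval_lt w)).symm
  | succ m ih =>
    rw [Function.iterate_succ_apply', wval_addW, ih, Nat.mod_add_mod, ← add_assoc]

lemma addW_cyclic {n : ℕ} (w w' : Fin n → Bool) : ∃ m : ℕ, addW^[m] w = w' := by
  refine ⟨2 ^ n - wval w + wval w', wval_inj ?_⟩
  rw [wval_iter]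
  have h1 := wval_lt w
  have h2 := wval_lt w'
  have : wval w + (2 ^ n - wval w + wval w') = 2 ^ n + wval w' := by omega
  rw [this, Nat.add_mod_left, Nat.mod_eq_of_lt h2]

lemma nest_aux (J : (n : ℕ) → (Fin n → Bool) → Set ℝ)
    (hnest : ∀ n (w : Fin (n + 1) → Bool), J (n + 1) w ⊆ J n (fun k => w k.castSucc)) :
    ∀ (m n : ℕ) (h : m ≤ n) (v : Fin n → Bool),
      J n v ⊆ J m (fun k => v (Fin.castLE h k)) := by
  intro m n
  induction n with
  | zero =>
    intro h v
    have hm : m = 0 := Nat.le_zero.mp h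
    subst hm
    have he : (fun k => v (Fin.castLE h k)) = v :=
      funext fun k => congrArg v (Fin.eq_of_val_eq rfl)
    rw [he]
  | succ n ih =>
    intro h v
    rcases Nat.eq_or_lt_of_le h with he | hlt
    · subst he
      have he2 : (fun k => v (Fin.castLE h k)) = v :=
        funext fun k => congrArg v (Fin.eq_of_val_eq rfl)
      rw [he2]
    · have h' : m ≤ n := Nat.lt_succ_iff.mp hlt
      have e : (fun k => v (Fin.castLE h k))
          = (fun k => (fun j : Fin n => v j.castSucc) (Fin.castLE h' k)) :=
        funext fun k => congrArg v (Fin.eq_of_val_eq rfl)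
      rw [e]
      exact (hnest n v).trans (ih h' _)

/-- Suppose `f` is a continuous interval map with zero topological entropy and `K` an
infinite minimal set such that every fiber `I_w` of the associated binary coding is a
single point. Then `(K, f|K)` is topologically conjugate to the adding machine on
`Σ = {0,1}^ℕ`, and in particular equicontinuous. -/
theorem singleton_fibers_conjugate_adding_machine (a b : ℝ) (f : ℝ → ℝ)
    (hf : ContinuousOn f (Set.Icc a b))
    (hmaps : Set.MapsTo f (Set.Icc a b) (Set.Icc a b))
    (hent : coverEntropy f (Set.Icc a b) = 0)
    (K : Set ℝ) (hK : K ⊆ Set.Icc a b) (hKinf : K.Infinite) (hKcl : IsClosed K)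
    (hKinv : Set.MapsTo f K K)
    (hmin : ∀ x ∈ K, K ⊆ closure (Set.range fun n : ℕ => f^[n] x))
    -- the associated binary coding by nested families of closed intervals:
    (J : (n : ℕ) → (Fin n → Bool) → Set ℝ)
    (hsub : ∀ n (w : Fin n → Bool), J n w ⊆ Set.Icc a b)
    (hne : ∀ n (w : Fin n → Bool), (J n w).Nonempty)
    (hcomp : ∀ n (w : Fin n → Bool), IsCompact (J n w))
    (hconn : ∀ n (w : Fin n → Bool), (J n w).OrdConnected)
    (hdisj : ∀ n (w w' : Fin n → Bool), w ≠ w' → Disjoint (J n w) (J n w'))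
    (hnest : ∀ n (w : Fin (n + 1) → Bool), J (n + 1) w ⊆ J n (fun k => w k.castSucc))
    (hcyc : ∀ n (w : Fin n → Bool), f '' J n w = J n (addW w))
    (hKsub : K ⊆ ⋂ n : ℕ, ⋃ w : Fin n → Bool, J n w)
    -- every fiber `I_w` is a single point:
    (hsing : ∀ w : ℕ → Bool, ∃ x : ℝ, (⋂ n : ℕ, J n (fun k : Fin n => w k)) = {x}) :
    (∃ h : (ℕ → Bool) → ℝ, Continuous h ∧ Function.Injective h ∧
        Set.range h = K ∧ ∀ w : ℕ → Bool, f (h w) = h (addM w)) ∧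
      ∀ ε > (0 : ℝ), ∃ δ > (0 : ℝ), ∀ u ∈ K, ∀ v ∈ K, |u - v| < δ →
        ∀ n : ℕ, |f^[n] u - f^[n] v| < ε := by
  classical
  have nest := nest_aux J hnest
  have hcupK : ∀ (n : ℕ) (x : ℝ), x ∈ K → ∃ v : Fin n → Bool, x ∈ J n v := by
    intro n x hx
    exact Set.mem_iUnion.mp (Set.mem_iInter.mp (hKsub hx) n)
  have hpoint : ∀ (w : ℕ → Bool) (n : ℕ), (hsing w).choose ∈ J n (fun k : Fin n => w k) := by
    intro w n
    have hmem : (hsing w).choose ∈ ⋂ n : ℕ, J n (fun k : Fin n => w k) :=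
      (hsing w).choose_spec.symm.subset rfl
    exact Set.mem_iInter.mp hmem n
  have huniq : ∀ (w : ℕ → Bool) (x : ℝ),
      (∀ n, x ∈ J n (fun k : Fin n => w k)) → x = (hsing w).choose := by
    intro w x hx
    have hm : x ∈ ⋂ n : ℕ, J n (fun k : Fin n => w k) := Set.mem_iInter.mpr hx
    rw [(hsing w).choose_spec] at hm
    exact hm
  have mono : ∀ (w : ℕ → Bool) (m n : ℕ), m ≤ n →
      J n (fun k : Fin n => w k) ⊆ J m (fun k : Fin m => w k) := by
    intro w m n hmn
    have h1 := nest m n hmn (fun k : Fin n => w k)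
    have he : (fun k : Fin m => (fun k : Fin n => w (k : ℕ)) (Fin.castLE hmn k))
        = (fun k : Fin m => w (k : ℕ)) := rfl
    rwa [he] at h1
  -- shrinking of fibers
  have shrink : ∀ (w : ℕ → Bool) (ε : ℝ), 0 < ε →
      ∃ n, J n (fun k : Fin n => w k) ⊆ Metric.ball ((hsing w).choose) ε := by
    intro w ε hε
    by_contra hcon
    push_neg at hcon
    set s : ℕ → Set ℝ :=
      fun n => J n (fun k : Fin n => w k) ∩ (Metric.ball ((hsing w).choose) ε)ᶜ with hsdef
    have hsne : ∀ n, (s n).Nonempty := by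
      intro n
      obtain ⟨x, hx1, hx2⟩ := Set.not_subset.mp (hcon n)
      exact ⟨x, hx1, hx2⟩
    have hscl : ∀ n, IsClosed (s n) :=
      fun n => ((hcomp n _).isClosed).inter Metric.isOpen_ball.isClosed_compl
    have hscomp : IsCompact (s 0) := (hcomp 0 _).inter_right Metric.isOpen_ball.isClosed_compl
    have hmono : ∀ n, s (n+1) ⊆ s n :=
      fun n => Set.inter_subset_inter_left _ (mono w n (n+1) (Nat.le_succ n))
    obtain ⟨x, hx⟩ :=
      IsCompact.nonempty_iInter_of_sequence_nonempty_isCompact_isClosed s hmono hsne hscomp hscl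
    have hx1 : ∀ n, x ∈ J n (fun k : Fin n => w k) := fun n => (Set.mem_iInter.mp hx n).1
    have hx2 : x ∉ Metric.ball ((hsing w).choose) ε := (Set.mem_iInter.mp hx 0).2
    have hxc := huniq w x hx1
    subst hxc
    exact hx2 (Metric.mem_ball_self hε)
  -- uniform smallness
  have unif : ∀ ε : ℝ, 0 < ε →
      ∃ n : ℕ, ∀ v : Fin n → Bool, ∀ x ∈ J n v, ∀ y ∈ J n v, |x - y| < ε := by
    intro ε hε
    by_contra hcon
    push_neg at hcon
    choose v x hx y hy hxy using hcon
    set W : ℕ → (ℕ → Bool) := fun n k => if hk : k < n then v n ⟨k, hk⟩ else false with hWdef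
    obtain ⟨L, -, φ, hφ, hlim⟩ :=
      (isCompact_univ : IsCompact (Set.univ : Set (ℕ → Bool))).tendsto_subseq
        (fun n => Set.mem_univ (W n))
    obtain ⟨m, hball⟩ := shrink L (ε/2) (by linarith)
    have hUopen : IsOpen {w' : ℕ → Bool | ∀ k, k < m → w' k = L k} := by
      have he : {w' : ℕ → Bool | ∀ k, k < m → w' k = L k}
          = Set.pi ↑(Finset.range m) (fun k => {L k}) := by
        ext w'; simp [Set.mem_pi]
      rw [he]
      exact isOpen_set_pi (Finset.range m).finite_toSet (fun k _ => isOpen_discrete _)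
    have hev1 : ∀ᶠ j in Filter.atTop, (W (φ j)) ∈ {w' : ℕ → Bool | ∀ k, k < m → w' k = L k} :=
      hlim.eventually (Filter.eventually_of_mem (hUopen.mem_nhds (fun k _ => rfl))
        (fun w' hw' => hw'))
    have hev2 : ∀ᶠ j in Filter.atTop, m ≤ φ j :=
      Filter.eventually_atTop.mpr ⟨m, fun j hj => le_trans hj hφ.le_apply⟩
    obtain ⟨j, hj1, hj2⟩ := (hev1.and hev2).exists
    have hsubJ : J (φ j) (v (φ j)) ⊆ J m (fun k : Fin m => v (φ j) (Fin.castLE hj2 k)) :=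
      nest m (φ j) hj2 _
    have hwords : (fun k : Fin m => v (φ j) (Fin.castLE hj2 k)) = (fun k : Fin m => L (k : ℕ)) := by
      funext k
      have h1 : W (φ j) (k : ℕ) = L (k : ℕ) := hj1 (k : ℕ) k.isLt
      rw [← h1, hWdef]
      simp only
      rw [dif_pos (lt_of_lt_of_le k.isLt hj2)]
      exact congrArg (v (φ j)) (Fin.eq_of_val_eq rfl)
    have hx' : x (φ j) ∈ J m (fun k : Fin m => L (k : ℕ)) := by
      rw [← hwords]; exact hsubJ (hx (φ j))
    have hy' : y (φ j) ∈ J m (fun k : Fin m => L (k : ℕ)) := by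
      rw [← hwords]; exact hsubJ (hy (φ j))
    have d1 := hball hx'
    have d2 := hball hy'
    rw [Metric.mem_ball, Real.dist_eq] at d1 d2
    have h5 := abs_sub_le (x (φ j)) ((hsing L).choose) (y (φ j))
    rw [abs_sub_comm ((hsing L).choose) (y (φ j))] at h5
    linarith [hxy (φ j)]
  -- positive gaps between distinct cells
  have pair : ∀ (n : ℕ) (p : (Fin n → Bool) × (Fin n → Bool)),
      ∃ δ : ℝ, 0 < δ ∧ (p.1 ≠ p.2 → ∀ x ∈ J n p.1, ∀ y ∈ J n p.2, δ ≤ |x - y|) := by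
    intro n p
    by_cases hp : p.1 = p.2
    · exact ⟨1, one_pos, fun h => absurd hp h⟩
    · have hdis := hdisj n p.1 p.2 hp
      have htne := hne n p.2
      have htcl := (hcomp n p.2).isClosed
      obtain ⟨x₀, hx₀, hmin'⟩ := (hcomp n p.1).exists_isMinOn (hne n p.1)
        (Metric.continuous_infDist_pt (J n p.2)).continuousOn
      refine ⟨Metric.infDist x₀ (J n p.2), ?_, ?_⟩
      · exact (htcl.notMem_iff_infDist_pos htne).mp
          (fun hmem => Set.disjoint_left.mp hdis hx₀ hmem)
      · intro _ z hz y hy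
        calc Metric.infDist x₀ (J n p.2) ≤ Metric.infDist z (J n p.2) :=
              isMinOn_iff.mp hmin' z hz
          _ ≤ dist z y := Metric.infDist_le_dist_of_mem hy
          _ = |z - y| := Real.dist_eq z y
  have gap : ∀ n : ℕ, ∃ δ : ℝ, 0 < δ ∧ ∀ v v' : Fin n → Bool, v ≠ v' →
      ∀ x ∈ J n v, ∀ y ∈ J n v', δ ≤ |x - y| := by
    intro n
    choose δf hδf hgf using pair n
    refine ⟨Finset.univ.inf' Finset.univ_nonempty δf, ?_, ?_⟩
    · rw [Finset.lt_inf'_iff]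
      exact fun p _ => hδf p
    · intro v v' hvv z hz y hy
      exact le_trans (Finset.inf'_le δf (Finset.mem_univ (v, v'))) (hgf (v, v') hvv z hz y hy)
  have hKiter : ∀ (m : ℕ) (x : ℝ), x ∈ K → f^[m] x ∈ K := fun m x hx => hKinv.iterate m hx
  have iterimg : ∀ (m n : ℕ) (v : Fin n → Bool), f^[m] '' J n v = J n (addW^[m] v) := by
    intro m
    induction m with
    | zero => intro n v; simp
    | succ m ih =>
      intro n v
      rw [Function.iterate_succ', Set.image_comp, ih, hcyc, Function.iterate_succ_apply']
  have Kmeets : ∀ (n : ℕ) (v : Fin n → Bool), (K ∩ J n v).Nonempty := by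
    intro n v
    obtain ⟨x₀, hx₀⟩ := hKinf.nonempty
    obtain ⟨v₀, hv₀⟩ := hcupK n x₀ hx₀
    obtain ⟨m, hm⟩ := addW_cyclic v₀ v
    refine ⟨f^[m] x₀, hKiter m x₀ hx₀, ?_⟩
    rw [← hm, ← iterimg]
    exact Set.mem_image_of_mem _ hv₀
  have hrange1 : ∀ w : ℕ → Bool, (hsing w).choose ∈ K := by
    intro w
    set s : ℕ → Set ℝ := fun n => K ∩ J n (fun k : Fin n => w k) with hsdef
    have hmono : ∀ n, s (n+1) ⊆ s n :=
      fun n => Set.inter_subset_inter_right K (mono w n (n+1) (Nat.le_succ n))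
    have hsne : ∀ n, (s n).Nonempty := fun n => Kmeets n _
    have hcomp0 : IsCompact (s 0) := (hcomp 0 _).inter_left hKcl
    have hscl : ∀ n, IsClosed (s n) := fun n => hKcl.inter (hcomp n _).isClosed
    obtain ⟨z, hz⟩ :=
      IsCompact.nonempty_iInter_of_sequence_nonempty_isCompact_isClosed s hmono hsne hcomp0 hscl
    have hz1 : z ∈ K := (Set.mem_iInter.mp hz 0).1
    have hz2 : ∀ n, z ∈ J n (fun k : Fin n => w k) := fun n => (Set.mem_iInter.mp hz n).2
    have hzc := huniq w z hz2
    rwa [← hzc]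
  have hrange2 : ∀ x ∈ K, ∃ w : ℕ → Bool, (hsing w).choose = x := by
    intro x hx
    choose vn hvn using fun n => hcupK n x hx
    have uniqw : ∀ (n : ℕ) (v v' : Fin n → Bool), x ∈ J n v → x ∈ J n v' → v = v' := by
      intro n v v' h1 h2
      by_contra hne'
      exact Set.disjoint_left.mp (hdisj n v v' hne') h1 h2
    have compat : ∀ (m n : ℕ) (h : m ≤ n), (fun k : Fin m => vn n (Fin.castLE h k)) = vn m :=
      fun m n h => uniqw m _ _ (nest m n h (vn n) (hvn n)) (hvn m)
    refine ⟨fun k => vn (k+1) ⟨k, Nat.lt_succ_self k⟩, ?_⟩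
    have hres : ∀ n : ℕ,
        (fun k : Fin n => vn ((k : ℕ)+1) ⟨(k : ℕ), Nat.lt_succ_self _⟩) = vn n := by
      intro n
      funext k
      have h1 : (k : ℕ) + 1 ≤ n := k.isLt
      have h2 := congrFun (compat ((k : ℕ)+1) n h1) ⟨(k : ℕ), Nat.lt_succ_self _⟩
      rw [← h2]
      exact (congrArg (vn n) (Fin.eq_of_val_eq rfl)).symm
    symm
    refine huniq (fun k : ℕ => vn (k+1) ⟨k, Nat.lt_succ_self k⟩) x ?_
    intro n
    have h3 : x ∈ J n (fun k : Fin n => vn ((k : ℕ)+1) ⟨(k : ℕ), Nat.lt_succ_self _⟩) := by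
      rw [hres n]; exact hvn n
    exact h3
  have haddres : ∀ (w : ℕ → Bool) (n : ℕ),
      addW (fun k : Fin n => w k) = (fun k : Fin n => addM w k) := by
    intro w n
    funext k
    simp only [addW, addM]
    congr 1
    rw [decide_eq_decide]
    constructor
    · intro h j hj
      exact h ⟨j, lt_trans hj k.isLt⟩ hj
    · intro h j hj
      exact h (j : ℕ) hj
  have hconj : ∀ w : ℕ → Bool, f ((hsing w).choose) = (hsing (addM w)).choose := by
    intro w
    apply huniq (addM w)
    intro n
    have h1 : f ((hsing w).choose) ∈ f '' J n (fun k : Fin n => w k) :=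
      Set.mem_image_of_mem f (hpoint w n)
    rw [hcyc, haddres w n] at h1
    exact h1
  have hcontc : Continuous (fun w : ℕ → Bool => (hsing w).choose) := by
    rw [continuous_iff_continuousAt]
    intro w
    refine Metric.tendsto_nhds.mpr ?_
    intro ε hε
    obtain ⟨n, hud⟩ := unif ε hε
    have hUopen : IsOpen {w' : ℕ → Bool | ∀ k, k < n → w' k = w k} := by
      have he : {w' : ℕ → Bool | ∀ k, k < n → w' k = w k}
          = Set.pi ↑(Finset.range n) (fun k => {w k}) := by
        ext w'; simp [Set.mem_pi]
      rw [he]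
      exact isOpen_set_pi (Finset.range n).finite_toSet (fun k _ => isOpen_discrete _)
    filter_upwards [hUopen.mem_nhds (fun k _ => rfl)] with w' hw'
    have he2 : (fun k : Fin n => w' (k : ℕ)) = (fun k : Fin n => w (k : ℕ)) :=
      funext fun k => hw' (k : ℕ) k.isLt
    have h1 : (hsing w').choose ∈ J n (fun k : Fin n => w (k : ℕ)) := by
      rw [← he2]; exact hpoint w' n
    rw [Real.dist_eq]
    exact hud _ _ h1 _ (hpoint w n)
  have hinj : Function.Injective (fun w : ℕ → Bool => (hsing w).choose) := by
    intro w w' he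
    have he' : (hsing w).choose = (hsing w').choose := he
    by_contra hne'
    obtain ⟨k, hk⟩ := Function.ne_iff.mp hne'
    have hresne : (fun j : Fin (k+1) => w (j : ℕ)) ≠ (fun j : Fin (k+1) => w' (j : ℕ)) := by
      intro hcontra
      exact hk (congrFun hcontra ⟨k, Nat.lt_succ_self k⟩)
    have hdis := hdisj (k+1) _ _ hresne
    have h1 := hpoint w (k+1)
    have h2 := hpoint w' (k+1)
    rw [he'] at h1
    exact Set.disjoint_left.mp hdis h1 h2
  constructor
  · refine ⟨fun w => (hsing w).choose, hcontc, hinj, ?_, fun w => hconj w⟩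
    apply Set.Subset.antisymm
    · rintro _ ⟨w, rfl⟩
      exact hrange1 w
    · intro x hx
      obtain ⟨w, hw⟩ := hrange2 x hx
      exact ⟨w, hw⟩
  · intro ε hε
    obtain ⟨n, hud⟩ := unif ε hε
    obtain ⟨δ, hδ, hgap⟩ := gap n
    refine ⟨δ, hδ, ?_⟩
    intro u hu v hv huv m
    obtain ⟨vu, hvu⟩ := hcupK n u hu
    obtain ⟨vv, hvv⟩ := hcupK n v hv
    have hvveq : vu = vv := by
      by_contra hne'
      exact absurd huv (not_lt.mpr (hgap vu vv hne' u hvu v hvv))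
    subst hvveq
    have h1 : f^[m] u ∈ J n (addW^[m] vu) := by
      rw [← iterimg m n vu]; exact Set.mem_image_of_mem _ hvu
    have h2 : f^[m] v ∈ J n (addW^[m] vu) := by
      rw [← iterimg m n vu]; exact Set.mem_image_of_mem _ hvv
    exact hud _ _ h1 _ h2
end
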